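/- arXiv:1811.00184 — 4 statements merged into one kernel-verified Lean document; each statement's English description precedes it below -/
import Mathlib

section
/- Let α be irrational with continued fraction denominators (q_n). If φ: 𝕋 → ℝ has bounded variation Var(φ), then for every s ∈ ℕ and every z ∈ 𝕋, the Birkhoff sum along the rotation by α satisfies |φ^{(q_s)}(z) − q_s ∫_𝕋 φ dλ| ≤ Var(φ), where φ^{(n)}(z) = Σ_{i=0}^{n−1} φ(z + iα). -/
open MeasureTheory

/-- Birkhoff sum `φ^{(n)}(x) = ∑_{i=0}^{n-1} φ(x + iα)` along the rotation by `α`. -/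
noncomputable def birkhoff (α : ℝ) (φ : ℝ → ℝ) (n : ℕ) (x : ℝ) : ℝ :=
  ∑ i ∈ Finset.range n, φ (x + i * α)

/-- `q` is the sequence of denominators of the continued fraction expansion of `α`. -/
def IsCFDenoms (α : ℝ) (q : ℕ → ℕ) : Prop :=
  ∀ n, (q n : ℝ) = (GenContFract.of α).dens n

section AuxLemmas

open Set


lemma not_terminatedAt_of_irrational {α : ℝ} (hα : Irrational α) (n : ℕ) :
    ¬(GenContFract.of α).TerminatedAt n := by
  intro h
  have hterm : (GenContFract.of α).Terminates := ⟨n, h⟩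
  obtain ⟨q, hq⟩ := (GenContFract.terminates_iff_rat α).mp hterm
  exact hα ⟨q, hq.symm⟩

lemma one_le_dens (α : ℝ) (n : ℕ) : (1:ℝ) ≤ (GenContFract.of α).dens n := by
  induction n with
  | zero => rw [GenContFract.zeroth_den_eq_one]
  | succ n ih => exact ih.trans (GenContFract.of_den_mono)

lemma exists_int_contsAux_a (α : ℝ) : ∀ n, ∃ p : ℤ, ((GenContFract.of α).contsAux n).a = p := by
  have key : ∀ n, (∃ p : ℤ, ((GenContFract.of α).contsAux n).a = p) ∧
      (∃ p : ℤ, ((GenContFract.of α).contsAux (n+1)).a = p) := by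
    intro n
    induction n with
    | zero =>
      constructor
      · exact ⟨1, by simp [GenContFract.contsAux]⟩
      · exact ⟨⌊α⌋, by simp [GenContFract.contsAux, GenContFract.of_h_eq_floor]⟩
    | succ n ih =>
      refine ⟨ih.2, ?_⟩
      obtain ⟨⟨p0, hp0⟩, ⟨p1, hp1⟩⟩ := ih
      cases hs : (GenContFract.of α).s.get? n with
      | none =>
        exact ⟨p1, by rw [show (GenContFract.of α).contsAux (n+2) =
          (GenContFract.of α).contsAux (n+1) by simp [GenContFract.contsAux, hs]]; exact hp1⟩
      | some gp =>
        obtain ⟨ha, b, hb⟩ := GenContFract.of_partNum_eq_one_and_exists_int_partDen_eq hs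
        refine ⟨b * p1 + p0, ?_⟩
        rw [show (GenContFract.of α).contsAux (n+2) =
          GenContFract.nextConts gp.a gp.b ((GenContFract.of α).contsAux n)
            ((GenContFract.of α).contsAux (n+1)) by simp [GenContFract.contsAux, hs]]
        simp only [GenContFract.nextConts, GenContFract.nextNum, ha, hb, hp0, hp1]
        push_cast
        ring
  exact fun n => (key n).1

lemma exists_int_nums (α : ℝ) (n : ℕ) : ∃ p : ℤ, (GenContFract.of α).nums n = p :=
  exists_int_contsAux_a α (n+1)

lemma determinant_of (α : ℝ) (hα : Irrational α) (n : ℕ) :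
    (GenContFract.of α).nums n * (GenContFract.of α).dens (n + 1) -
      (GenContFract.of α).dens n * (GenContFract.of α).nums (n + 1) = (-1) ^ (n + 1) :=
  SimpContFract.determinant (s := SimpContFract.of α)
    (not_terminatedAt_of_irrational hα n)


-- variation is invariant under integer translation, for a 1-periodic function
lemma eVar_shift {φ : ℝ → ℝ} (hper : Function.Periodic φ 1) (m : ℤ) (u v : ℝ) :
    eVariationOn φ (Set.Icc (u + m) (v + m)) = eVariationOn φ (Set.Icc u v) := by
  have hmono : MonotoneOn (fun x : ℝ => x + (m:ℝ)) (Set.Icc u v) :=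
    fun a _ b _ hab => by simpa using hab
  have himg : (fun x : ℝ => x + (m:ℝ)) '' Set.Icc u v = Set.Icc (u + m) (v + m) := by
    rw [Set.image_add_const_Icc]
  have hcomp : φ ∘ (fun x : ℝ => x + (m:ℝ)) = φ := by
    funext x
    have := (hper.int_mul m) x
    simpa using this
  rw [← himg, ← eVariationOn.comp_eq_of_monotoneOn φ _ hmono, hcomp]

lemma eVar_univ_Icc (φ : ℝ → ℝ) (a b : ℝ) :
    eVariationOn φ (Set.univ ∩ Set.Icc a b) = eVariationOn φ (Set.Icc a b) := by
  rw [Set.univ_inter]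

-- variation over any period window equals variation over [0,1]
lemma eVar_window {φ : ℝ → ℝ} (hper : Function.Periodic φ 1) (w : ℝ) :
    eVariationOn φ (Set.Icc w (w + 1)) = eVariationOn φ (Set.Icc 0 1) := by
  have h1 : eVariationOn φ (Set.Icc w (w+1)) =
      eVariationOn φ (Set.Icc (Int.fract w) (Int.fract w + 1)) := by
    have := eVar_shift hper ⌊w⌋ (Int.fract w) (Int.fract w + 1)
    rw [← this]
    congr 1
    rw [Int.fract]
    ring_nf
  rw [h1]
  set t := Int.fract w with ht
  have ht0 : 0 ≤ t := Int.fract_nonneg w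
  have ht1 : t ≤ 1 := (Int.fract_lt_one w).le
  have split1 : eVariationOn φ (Set.Icc t 1) + eVariationOn φ (Set.Icc 1 (t+1)) =
      eVariationOn φ (Set.Icc t (t+1)) := by
    have := eVariationOn.Icc_add_Icc φ (s := (Set.univ : Set ℝ)) ht1
      (by linarith : (1:ℝ) ≤ t + 1) (Set.mem_univ _)
    simpa [Set.univ_inter] using this
  have shift2 : eVariationOn φ (Set.Icc 1 (t+1)) = eVariationOn φ (Set.Icc 0 t) := by
    have := eVar_shift hper 1 0 t
    simpa [add_comm] using this
  have split2 : eVariationOn φ (Set.Icc 0 t) + eVariationOn φ (Set.Icc t 1) =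
      eVariationOn φ (Set.Icc 0 1) := by
    have := eVariationOn.Icc_add_Icc φ (s := (Set.univ : Set ℝ)) ht0 ht1 (Set.mem_univ _)
    simpa [Set.univ_inter] using this
  rw [← split1, shift2, ← split2]
  ring

-- integrability of a periodic BV function on every interval
lemma bv_intervalIntegrable {φ : ℝ → ℝ} (hper : Function.Periodic φ 1)
    (hbv : BoundedVariationOn φ (Set.Icc 0 1)) (a b : ℝ) :
    IntervalIntegrable φ volume a b := by
  -- first on [0,1]
  have hloc : LocallyBoundedVariationOn φ (Set.Icc 0 1) := fun x y _ _ =>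
    hbv.mono Set.inter_subset_left
  obtain ⟨p, q, hp, hq, hpq⟩ := hloc.exists_monotoneOn_sub_monotoneOn
  have h01 : IntervalIntegrable φ volume 0 1 := by
    have hup : IntervalIntegrable p volume 0 1 :=
      (hp.mono (by rw [Set.uIcc_of_le (by norm_num : (0:ℝ) ≤ 1)])).intervalIntegrable
    have huq : IntervalIntegrable q volume 0 1 :=
      (hq.mono (by rw [Set.uIcc_of_le (by norm_num : (0:ℝ) ≤ 1)])).intervalIntegrable
    rw [hpq]
    exact hup.sub huq
  -- then on every [m, m+1]
  have hshift : ∀ m : ℤ, IntervalIntegrable φ volume m (m + 1) := by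
    intro m
    have := h01.comp_add_right (-(m:ℝ))
    have heq : (fun x : ℝ => φ (x + -(m:ℝ))) = φ := by
      funext x
      have := (hper.int_mul (-m)) x
      push_cast at this ⊢
      simpa using this
    rw [heq] at this
    simpa [sub_neg_eq_add, zero_add, add_comm] using this
  -- then on [m, m+n]
  have hchain : ∀ (m : ℤ) (n : ℕ), IntervalIntegrable φ volume m (m + n) := by
    intro m n
    induction n with
    | zero => simp
    | succ n ih =>
      have hnext := hshift (m + n)
      push_cast at hnext
      have h2 := ih.trans hnext
      have he : (m:ℝ) + ((n+1 : ℕ):ℝ) = (m:ℝ) + (n:ℝ) + 1 := by push_cast; ring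
      rw [he]
      exact h2
  -- general a b via mono_set
  have key : ∀ a b : ℝ, a ≤ b → IntervalIntegrable φ volume a b := by
    intro a b hab
    have hm : (⌊a⌋ : ℝ) ≤ a := Int.floor_le a
    obtain ⟨n, hn⟩ : ∃ n : ℕ, b ≤ (⌊a⌋ : ℝ) + n := by
      obtain ⟨n, hn⟩ := exists_nat_ge (b - ⌊a⌋)
      exact ⟨n, by linarith⟩
    refine (hchain ⌊a⌋ n).mono_set ?_
    rw [Set.uIcc_of_le hab, Set.uIcc_of_le (by linarith : (⌊a⌋:ℝ) ≤ (⌊a⌋:ℝ) + n)]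
    exact Set.Icc_subset_Icc (by linarith) hn
  rcases le_total a b with h | h
  · exact key a b h
  · exact (key b a h).symm

lemma dk_core {φ : ℝ → ℝ} (hper : Function.Periodic φ 1)
    (hbv : BoundedVariationOn φ (Set.Icc 0 1)) (Q : ℕ) (hQ : 0 < Q) (w : ℝ)
    (y : ℕ → ℝ) (k : ℕ → ℕ) (hkQ : ∀ i < Q, k i < Q)
    (hkinj : ∀ i < Q, ∀ j < Q, k i = k j → i = j)
    (hy : ∀ i < Q, y i ∈ Set.Icc (w + (k i : ℝ) / Q) (w + ((k i : ℝ) + 1) / Q)) :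
    |(∑ i ∈ Finset.range Q, φ (y i)) - Q * ∫ x in (0:ℝ)..1, φ x| ≤
      (eVariationOn φ (Set.Icc 0 1)).toReal := by
  have hInt := bv_intervalIntegrable hper hbv
  have hQR : (0:ℝ) < Q := by exact_mod_cast hQ
  set a : ℕ → ℝ := fun j => w + (j:ℝ) / Q with ha
  have hamono : Monotone a := by
    intro m l hml
    have : (m:ℝ) ≤ l := by exact_mod_cast hml
    simp only [ha]
    gcongr
  have ha_succ : ∀ j : ℕ, a (j+1) = w + ((j:ℝ) + 1) / Q := by
    intro j; simp only [ha]; push_cast; ring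
  have haQ : a Q = w + 1 := by simp only [ha]; rw [div_self hQR.ne']
  have ha0 : a 0 = w := by simp [ha]
  -- the integral over [0,1] splits into the Q subinterval integrals
  have hsplit : ∫ x in (0:ℝ)..1, φ x = ∑ j ∈ Finset.range Q, ∫ x in a j..a (j+1), φ x := by
    rw [intervalIntegral.sum_integral_adjacent_intervals (fun j _ => hInt _ _), ha0, haQ]
    have := hper.intervalIntegral_add_eq 0 w
    simpa using this
  -- the image of k is everything
  have hinjOn : Set.InjOn k (Finset.range Q) := fun i hi j hj hij =>
    hkinj i (Finset.mem_range.mp hi) j (Finset.mem_range.mp hj) hij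
  have himg : Finset.image k (Finset.range Q) = Finset.range Q := by
    apply Finset.eq_of_subset_of_card_le
    · intro j hj
      obtain ⟨i, hi, rfl⟩ := Finset.mem_image.mp hj
      exact Finset.mem_range.mpr (hkQ i (Finset.mem_range.mp hi))
    · rw [Finset.card_image_of_injOn hinjOn]
  have hreindex : ∀ f : ℕ → ℝ, ∑ j ∈ Finset.range Q, f j = ∑ i ∈ Finset.range Q, f (k i) := by
    intro f
    have := Finset.sum_image (s := Finset.range Q) (g := k) (f := f)
      (fun x hx y hy h => hinjOn hx hy h)
    rw [himg] at this
    exact this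
  -- variations of the subintervals
  set V : ℕ → ENNReal := fun j => eVariationOn φ (Set.Icc (a j) (a (j+1))) with hV
  have hVsum : ∀ n : ℕ, ∑ j ∈ Finset.range n, V j = eVariationOn φ (Set.Icc (a 0) (a n)) := by
    intro n
    induction n with
    | zero =>
      simp [Set.Icc_self, eVariationOn.subsingleton φ (Set.subsingleton_singleton)]
    | succ n ih =>
      rw [Finset.sum_range_succ, ih]
      have h1 : a 0 ≤ a n := hamono (Nat.zero_le n)
      have h2 : a n ≤ a (n+1) := hamono (Nat.le_succ n)
      have := eVariationOn.Icc_add_Icc φ (s := (Set.univ : Set ℝ)) h1 h2 (Set.mem_univ _)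
      simpa [Set.univ_inter] using this
  have hVQ : ∑ j ∈ Finset.range Q, V j = eVariationOn φ (Set.Icc 0 1) := by
    rw [hVsum Q, ha0, haQ, eVar_window hper]
  have hVfin : ∀ j ∈ Finset.range Q, V j ≠ ⊤ := by
    intro j hj
    have hle : V j ≤ ∑ j ∈ Finset.range Q, V j :=
      Finset.single_le_sum (fun i _ => zero_le) hj
    rw [hVQ] at hle
    exact fun h => hbv (top_le_iff.mp (h ▸ hle))
  -- per-term estimate
  have hterm : ∀ i < Q, |φ (y i) - Q * ∫ x in a (k i)..a (k i + 1), φ x| ≤ (V (k i)).toReal := by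
    intro i hi
    set j := k i with hj
    have hAB : a j ≤ a (j+1) := hamono (Nat.le_succ j)
    have hBA : a (j+1) - a j = 1 / Q := by
      rw [ha_succ]
      show w + ((j:ℝ) + 1) / Q - (w + (j:ℝ)/Q) = 1/Q
      field_simp
      ring
    have hyi : y i ∈ Set.Icc (a j) (a (j+1)) := by
      rw [ha_succ]
      exact hy i hi
    have hVjfin : V j ≠ ⊤ := hVfin j (Finset.mem_range.mpr (hkQ i hi))
    have hbound : ∀ t ∈ Set.uIoc (a j) (a (j+1)), ‖φ (y i) - φ t‖ ≤ (V j).toReal := by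
      intro t ht
      rw [Set.uIoc_of_le hAB] at ht
      have ht' : t ∈ Set.Icc (a j) (a (j+1)) := Set.Ioc_subset_Icc_self ht
      have hed := eVariationOn.edist_le φ hyi ht'
      have : edist (φ (y i)) (φ t) = ENNReal.ofReal ‖φ (y i) - φ t‖ := by
        rw [edist_dist, Real.dist_eq, Real.norm_eq_abs]
      rw [this] at hed
      have := ENNReal.toReal_mono hVjfin hed
      rwa [ENNReal.toReal_ofReal (norm_nonneg _)] at this
    have hker : φ (y i) - Q * ∫ x in a j..a (j+1), φ x = Q * ∫ t in a j..a (j+1), (φ (y i) - φ t) := by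
      rw [intervalIntegral.integral_sub (intervalIntegrable_const) (hInt (a j) (a (j+1))),
        intervalIntegral.integral_const, smul_eq_mul, hBA]
      field_simp
    rw [hker, abs_mul, abs_of_pos hQR]
    have hnorm := intervalIntegral.norm_integral_le_of_norm_le_const hbound
    rw [Real.norm_eq_abs] at hnorm
    calc (Q:ℝ) * |∫ t in a j..a (j+1), (φ (y i) - φ t)|
        ≤ Q * ((V j).toReal * |a (j+1) - a j|) := by gcongr
      _ = (V j).toReal := by rw [hBA, abs_of_pos (by positivity)]; field_simp
  -- put it together
  have hmain : |(∑ i ∈ Finset.range Q, φ (y i)) - Q * ∫ x in (0:ℝ)..1, φ x|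
      ≤ ∑ i ∈ Finset.range Q, (V (k i)).toReal := by
    have heq : (∑ i ∈ Finset.range Q, φ (y i)) - Q * ∫ x in (0:ℝ)..1, φ x =
        ∑ i ∈ Finset.range Q, (φ (y i) - Q * ∫ x in a (k i)..a (k i + 1), φ x) := by
      rw [Finset.sum_sub_distrib, hsplit, hreindex (fun j => ∫ x in a j..a (j+1), φ x),
        Finset.mul_sum]
    rw [heq]
    refine (Finset.abs_sum_le_sum_abs _ _).trans ?_
    exact Finset.sum_le_sum fun i hi => hterm i (Finset.mem_range.mp hi)
  refine hmain.trans ?_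
  have : ∑ i ∈ Finset.range Q, (V (k i)).toReal = ∑ j ∈ Finset.range Q, (V j).toReal :=
    (hreindex fun j => (V j).toReal).symm
  rw [this, ← ENNReal.toReal_sum hVfin, hVQ]

end AuxLemmas

/-- Denjoy–Koksma inequality: for a 1-periodic function `φ` of bounded variation and any
denominator `q_s` of the continued fraction of the irrational `α`, the Birkhoff sum at time `q_s`
deviates from `q_s ∫ φ` by at most the total variation of `φ`. -/
theorem denjoy_koksma (α : ℝ) (hα : Irrational α) (q : ℕ → ℕ) (hq : IsCFDenoms α q)
    (φ : ℝ → ℝ) (hper : Function.Periodic φ 1)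
    (hbv : BoundedVariationOn φ (Set.Icc 0 1)) (s : ℕ) (z : ℝ) :
    |birkhoff α φ (q s) z - (q s : ℝ) * ∫ x in (0:ℝ)..1, φ x| ≤
      (eVariationOn φ (Set.Icc 0 1)).toReal := by
  obtain ⟨Q, hQdef⟩ : ∃ Q, Q = q s := ⟨_, rfl⟩
  rw [← hQdef]
  have hQR1 : (1:ℝ) ≤ (Q:ℝ) := by rw [hQdef, hq s]; exact one_le_dens α s
  have hQ : 0 < Q := by exact_mod_cast lt_of_lt_of_le zero_lt_one hQR1
  have hQR : (0:ℝ) < Q := lt_of_lt_of_le zero_lt_one hQR1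
  haveI : NeZero Q := ⟨hQ.ne'⟩
  obtain ⟨p, hp⟩ := exists_int_nums α s
  obtain ⟨p', hp'⟩ := exists_int_nums α (s+1)
  obtain ⟨Q', hQ'def⟩ : ∃ Q', Q' = q (s+1) := ⟨_, rfl⟩
  have hQ'R1 : (1:ℝ) ≤ (Q':ℝ) := by rw [hQ'def, hq (s+1)]; exact one_le_dens α (s+1)
  have hQ'R : (0:ℝ) < Q' := lt_of_lt_of_le zero_lt_one hQ'R1
  have hQQ' : (Q:ℝ) ≤ (Q':ℝ) := by
    rw [hQdef, hQ'def, hq s, hq (s+1)]; exact GenContFract.of_den_mono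
  -- determinant over ℤ
  have hdetR := determinant_of α hα s
  rw [hp, hp', ← hq s, ← hq (s+1), ← hQdef, ← hQ'def] at hdetR
  have hdet : p * (Q' : ℤ) - (Q : ℤ) * p' = (-1) ^ (s+1) := by exact_mod_cast hdetR
  -- approximation
  obtain ⟨c, hc_def⟩ : ∃ c : ℝ, c = α - p / Q := ⟨_, rfl⟩
  have habs : |c| ≤ 1 / (Q * Q') := by
    have h := GenContFract.abs_sub_convs_le (not_terminatedAt_of_irrational hα s)
    rw [GenContFract.conv_eq_num_div_den, hp, ← hq s, ← hq (s+1), ← hQdef, ← hQ'def] at h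
    rw [hc_def]
    exact h
  have hcb : ∀ i : ℕ, i < Q → (i:ℝ) * |c| ≤ 1 / Q := by
    intro i hi
    have hiQ : (i:ℝ) ≤ (Q:ℝ) - 1 := by
      have : (i:ℝ) + 1 ≤ Q := by exact_mod_cast hi
      linarith
    have h1 : (i:ℝ) * |c| ≤ ((Q:ℝ) - 1) * (1 / (Q * Q')) :=
      mul_le_mul hiQ habs (abs_nonneg _) (by linarith)
    refine h1.trans ?_
    rw [mul_one_div, div_le_div_iff₀ (by positivity) hQR]
    nlinarith
  -- the residue map
  obtain ⟨e, he_def⟩ : ∃ e : ℕ → ℕ, e = fun i : ℕ => ((i : ZMod Q) * (p : ZMod Q)).val := ⟨_, rfl⟩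
  have he_lt : ∀ i, e i < Q := fun i => by rw [he_def]; exact ZMod.val_lt _
  have he_cast : ∀ i : ℕ, ((e i : ℕ) : ZMod Q) = (i : ZMod Q) * (p : ZMod Q) := by
    intro i
    rw [he_def]
    exact ZMod.natCast_rightInverse _
  -- p is invertible mod Q with explicit inverse
  have hunit : (p : ZMod Q) * ((Q' : ZMod Q) * (-1) ^ (s+1)) = 1 := by
    have hz : ((p * (Q' : ℤ) - (Q : ℤ) * p' : ℤ) : ZMod Q) = (((-1:ℤ) ^ (s+1) : ℤ) : ZMod Q) := by
      rw [hdet]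
    push_cast at hz
    rw [ZMod.natCast_self, zero_mul, sub_zero] at hz
    calc (p : ZMod Q) * ((Q' : ZMod Q) * (-1) ^ (s+1))
        = ((p : ZMod Q) * (Q' : ZMod Q)) * (-1) ^ (s+1) := by ring
      _ = (-1) ^ (s+1) * (-1) ^ (s+1) := by rw [hz]
      _ = 1 := by rw [← mul_pow, neg_mul_neg, one_mul, one_pow]
  have hinj : ∀ i < Q, ∀ j < Q, e i = e j → i = j := by
    intro i hi j hj hij
    have h1 : ((e i : ℕ) : ZMod Q) = ((e j : ℕ) : ZMod Q) := by rw [hij]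
    rw [he_cast, he_cast] at h1
    have h2 : (i : ZMod Q) = (j : ZMod Q) := by
      calc (i : ZMod Q) = (i : ZMod Q) * ((p : ZMod Q) * ((Q' : ZMod Q) * (-1) ^ (s+1))) := by
            rw [hunit, mul_one]
        _ = ((i : ZMod Q) * (p : ZMod Q)) * ((Q' : ZMod Q) * (-1) ^ (s+1)) := by ring
        _ = ((j : ZMod Q) * (p : ZMod Q)) * ((Q' : ZMod Q) * (-1) ^ (s+1)) := by rw [h1]
        _ = (j : ZMod Q) * ((p : ZMod Q) * ((Q' : ZMod Q) * (-1) ^ (s+1))) := by ring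
        _ = (j : ZMod Q) := by rw [hunit, mul_one]
    have := congrArg ZMod.val h2
    rwa [ZMod.val_cast_of_lt hi, ZMod.val_cast_of_lt hj] at this
  -- the points
  obtain ⟨y, hy_def⟩ : ∃ y : ℕ → ℝ, y = fun i => z + (e i : ℝ) / Q + i * c := ⟨_, rfl⟩
  obtain ⟨w, hw_def⟩ : ∃ w : ℝ, w = if 0 ≤ c then z else z - 1/Q := ⟨_, rfl⟩
  have hy_mem : ∀ i < Q, y i ∈ Set.Icc (w + (e i : ℝ) / Q) (w + ((e i : ℝ) + 1) / Q) := by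
    intro i hi
    have hib := hcb i hi
    have hinn : (0:ℝ) ≤ i := Nat.cast_nonneg i
    rw [Set.mem_Icc]
    rcases le_or_gt 0 c with hc0 | hc0
    · rw [hw_def, if_pos hc0]
      have h1 : (0:ℝ) ≤ (i:ℝ) * c := mul_nonneg hinn hc0
      have h2 : (i:ℝ) * c ≤ 1 / Q := by
        rw [abs_of_nonneg hc0] at hib; exact hib
      constructor
      · rw [hy_def]; dsimp only; linarith
      · rw [hy_def]; dsimp only
        have heq : ((e i : ℝ) + 1) / Q = (e i : ℝ)/Q + 1/Q := by ring
        rw [heq]; linarith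
    · rw [hw_def, if_neg (not_le.mpr hc0)]
      have h1 : (i:ℝ) * c ≤ 0 := mul_nonpos_of_nonneg_of_nonpos hinn hc0.le
      have h2 : -(1/Q) ≤ (i:ℝ) * c := by
        rw [abs_of_neg hc0] at hib
        have : (i:ℝ) * (-c) ≤ 1/Q := hib
        linarith [this]
      constructor
      · rw [hy_def]; dsimp only; linarith
      · rw [hy_def]; dsimp only
        have heq : ((e i : ℝ) + 1) / Q = (e i : ℝ)/Q + 1/Q := by ring
        rw [heq]; linarith
  have hφeq : ∀ i < Q, φ (z + i * α) = φ (y i) := by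
    intro i hi
    have hdvd : (Q:ℤ) ∣ ((i:ℤ) * p - (e i : ℤ)) := by
      rw [← ZMod.intCast_zmod_eq_zero_iff_dvd]
      push_cast
      rw [he_cast i, sub_self]
    obtain ⟨m, hm⟩ := hdvd
    have hmR : (i:ℝ) * p - (e i : ℝ) = Q * m := by exact_mod_cast congrArg (Int.cast : ℤ → ℝ) hm
    have hzy : z + i * α = y i + (m : ℝ) * 1 := by
      have hα_eq : α = c + p / Q := by rw [hc_def]; ring
      rw [hα_eq, hy_def]
      dsimp only
      have hkey : (i:ℝ) * (p / Q) = (e i : ℝ)/Q + m := by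
        field_simp
        linarith [hmR]
      rw [mul_add, hkey]
      ring
    rw [hzy, (hper.int_mul m) (y i)]
  have hbsum : birkhoff α φ Q z = ∑ i ∈ Finset.range Q, φ (y i) := by
    unfold birkhoff
    rw [hQdef] at hφeq ⊢
    exact Finset.sum_congr rfl fun i hi => hφeq i (Finset.mem_range.mp hi)
  rw [hbsum]
  exact dk_core hper hbv Q hQ w y e (fun i _ => he_lt i) hinj hy_mem
end

section
/- Let α be irrational and φ: 𝕋 → ℝ of bounded variation. For every ε > 0 there exists n_ε ∈ ℕ such that for every integer n with |n| ≥ n_ε and every x ∈ 𝕋, |φ^{(n)}(x) − n ∫_𝕋 φ dλ| < ε|n|, where φ^{(n)} denotes the Birkhoff sum of φ under the rotation R_α (with φ^{(−n)}(x) = −φ^{(n)}(x − nα) for n ≥ 1). -/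
open MeasureTheory

/-- Birkhoff sums indexed by `ℤ`: `φ^{(−n)}(x) = −φ^{(n)}(x − nα)` for `n ≥ 1`. -/
noncomputable def birkhoffZ (α : ℝ) (φ : ℝ → ℝ) (n : ℤ) (x : ℝ) : ℝ :=
  if 0 ≤ n then birkhoff α φ n.toNat x
  else -birkhoff α φ (-n).toNat (x - ((-n).toNat : ℝ) * α)

section PartA

variable {α : ℝ}

/-- Uniform Birkhoff averaging for complex functions on the circle, key predicate. -/
def QProp (α : ℝ) (P : C(UnitAddCircle, ℂ)) : Prop :=
  ∀ η > (0:ℝ), ∃ N : ℕ, ∀ n ≥ N, ∀ x : ℝ,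
    ‖(∑ i ∈ Finset.range n, P (↑(x + i * α))) - n * ∫ y in (0:ℝ)..1, P ↑y‖ ≤ η * n

lemma qprop_zero : QProp α 0 := by
  intro η hη
  refine ⟨0, fun n _ x => ?_⟩
  simp [intervalIntegral.integral_zero]
  positivity

lemma qprop_add {P Q : C(UnitAddCircle, ℂ)} (hP : QProp α P) (hQ : QProp α Q) :
    QProp α (P + Q) := by
  intro η hη
  obtain ⟨N₁, h₁⟩ := hP (η/2) (by positivity)
  obtain ⟨N₂, h₂⟩ := hQ (η/2) (by positivity)
  refine ⟨max N₁ N₂, fun n hn x => ?_⟩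
  have e1 : ∫ y in (0:ℝ)..1, (P + Q) ↑y = (∫ y in (0:ℝ)..1, P ↑y) + ∫ y in (0:ℝ)..1, Q ↑y := by
    simp only [ContinuousMap.add_apply]
    exact intervalIntegral.integral_add
      ((P.continuous.comp (AddCircle.continuous_mk' 1)).intervalIntegrable _ _)
      ((Q.continuous.comp (AddCircle.continuous_mk' 1)).intervalIntegrable _ _)
  have key : (∑ i ∈ Finset.range n, (P + Q) (↑(x + i * α))) - n * ∫ y in (0:ℝ)..1, (P + Q) ↑y
      = ((∑ i ∈ Finset.range n, P (↑(x + i * α))) - n * ∫ y in (0:ℝ)..1, P ↑y)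
        + ((∑ i ∈ Finset.range n, Q (↑(x + i * α))) - n * ∫ y in (0:ℝ)..1, Q ↑y) := by
    rw [e1]; simp only [ContinuousMap.add_apply, Finset.sum_add_distrib]; ring
  rw [key]
  calc ‖_ + _‖ ≤ _ + _ := norm_add_le _ _
    _ ≤ η/2 * n + η/2 * n :=
      add_le_add (h₁ n (le_trans (le_max_left _ _) hn) x) (h₂ n (le_trans (le_max_right _ _) hn) x)
    _ = η * n := by ring

lemma qprop_smul {P : C(UnitAddCircle, ℂ)} (c : ℂ) (hP : QProp α P) : QProp α (c • P) := by
  intro η hη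
  obtain ⟨N, h⟩ := hP (η / (‖c‖ + 1)) (by positivity)
  refine ⟨N, fun n hn x => ?_⟩
  have e1 : ∫ y in (0:ℝ)..1, (c • P) ↑y = c * ∫ y in (0:ℝ)..1, P ↑y := by
    simp only [ContinuousMap.smul_apply, smul_eq_mul]
    exact intervalIntegral.integral_const_mul _ _
  have key : (∑ i ∈ Finset.range n, (c • P) (↑(x + i * α))) - n * ∫ y in (0:ℝ)..1, (c • P) ↑y
      = c * ((∑ i ∈ Finset.range n, P (↑(x + i * α))) - n * ∫ y in (0:ℝ)..1, P ↑y) := by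
    rw [e1]; simp only [ContinuousMap.smul_apply, smul_eq_mul, ← Finset.mul_sum]; ring
  rw [key, norm_mul]
  calc ‖c‖ * ‖_‖ ≤ ‖c‖ * (η / (‖c‖ + 1) * n) := by
        exact mul_le_mul_of_nonneg_left (h n hn x) (norm_nonneg c)
    _ ≤ η * n := by
        rw [show ‖c‖ * (η / (‖c‖ + 1) * n) = (‖c‖ / (‖c‖+1)) * (η * n) by field_simp]
        have h1 : ‖c‖ / (‖c‖ + 1) ≤ 1 := by
          rw [div_le_one (by positivity)]; linarith
        have h2 : (0:ℝ) ≤ η * n := by positivity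
        nlinarith

end PartA


section PartA2

variable {α : ℝ}

lemma fourier_coe_one (k : ℤ) (x : ℝ) :
    (fourier k (↑x : UnitAddCircle)) = Complex.exp ((2 * Real.pi * k * Complex.I) * x) := by
  rw [fourier_coe_apply]
  push_cast
  ring_nf

lemma integral_fourier_zero {k : ℤ} (hk : k ≠ 0) :
    ∫ y in (0:ℝ)..1, (fourier k (↑y : UnitAddCircle)) = 0 := by
  have hc : (2 * Real.pi * k * Complex.I) ≠ 0 := by
    simp [Real.pi_ne_zero, Complex.I_ne_zero, hk]
  calc ∫ y in (0:ℝ)..1, (fourier k (↑y : UnitAddCircle))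
      = ∫ y in (0:ℝ)..1, Complex.exp ((2 * Real.pi * k * Complex.I) * y) := by
        apply intervalIntegral.integral_congr; intro y _; exact fourier_coe_one k y
    _ = (Complex.exp ((2 * Real.pi * k * Complex.I) * 1)
          - Complex.exp ((2 * Real.pi * k * Complex.I) * 0)) / _ := integral_exp_mul_complex hc
    _ = 0 := by
        rw [mul_one, mul_zero, Complex.exp_zero]
        rw [show ((2:ℂ) * Real.pi * k * Complex.I) = k * (2 * Real.pi * Complex.I) by ring]
        rw [Complex.exp_int_mul_two_pi_mul_I]
        simp

lemma fourier_rot_ne_one (hα : Irrational α) {k : ℤ} (hk : k ≠ 0) :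
    Complex.exp ((2 * Real.pi * k * Complex.I) * α) ≠ 1 := by
  intro h
  rw [Complex.exp_eq_one_iff] at h
  obtain ⟨m, hm⟩ := h
  have h2 : (2 * (Real.pi:ℂ) * Complex.I) ≠ 0 := by
    simp [Real.pi_ne_zero, Complex.I_ne_zero]
  have key : ((k * α : ℝ) : ℂ) = ((m : ℤ) : ℂ) := by
    apply mul_left_cancel₀ h2
    push_cast
    rw [show (2*(Real.pi:ℂ)*Complex.I) * ((k:ℂ)*(α:ℂ)) = 2 * Real.pi * (k:ℂ) * Complex.I * α by
      ring, hm]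
    ring
  have hkα : Irrational ((k:ℝ) * α) := hα.intCast_mul hk
  exact hkα.ne_int m (by exact_mod_cast key)

lemma qprop_fourier (hα : Irrational α) (k : ℤ) : QProp α (fourier k) := by
  rcases eq_or_ne k 0 with rfl | hk
  · intro η hη
    refine ⟨0, fun n _ x => ?_⟩
    simp only [fourier_zero]
    rw [Finset.sum_const, Finset.card_range, intervalIntegral.integral_const]
    simp
    positivity
  · intro η hη
    set c : ℂ := 2 * Real.pi * k * Complex.I with hc
    set w : ℂ := Complex.exp (c * α) with hw
    have hw1 : w ≠ 1 := fourier_rot_ne_one hα hk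
    have hnorm_exp : ∀ t : ℝ, ‖Complex.exp (c * t)‖ = 1 := by
      intro t
      rw [Complex.norm_exp]
      have : (c * t).re = 0 := by simp [hc]
      rw [this, Real.exp_zero]
    set B : ℝ := 2 / ‖w - 1‖ with hB
    have hBpos : 0 < ‖w - 1‖ := by
      rw [norm_pos_iff]; exact sub_ne_zero.mpr hw1
    refine ⟨⌈B / η⌉₊ + 1, fun n hn x => ?_⟩
    have hsum : (∑ i ∈ Finset.range n, fourier k (↑(x + i * α) : UnitAddCircle))
        = Complex.exp (c * x) * ((w ^ n - 1) / (w - 1)) := by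
      rw [← geom_sum_eq hw1]
      rw [Finset.mul_sum]
      apply Finset.sum_congr rfl
      intro i _
      rw [fourier_coe_one, ← Complex.exp_nat_mul, ← Complex.exp_add]
      congr 1
      push_cast
      ring
    rw [integral_fourier_zero hk, hsum]
    simp only [mul_zero, sub_zero]
    rw [norm_mul, hnorm_exp, one_mul, norm_div]
    have h2 : ‖w ^ n - 1‖ ≤ 2 := by
      calc ‖w ^ n - 1‖ ≤ ‖w ^ n‖ + ‖(1:ℂ)‖ := norm_sub_le _ _
        _ ≤ 2 := by
          rw [norm_pow, hw, hnorm_exp]; norm_num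
    have hBn : B ≤ η * n := by
      have h3 : B / η ≤ ⌈B / η⌉₊ := Nat.le_ceil _
      have h4 : (⌈B / η⌉₊ : ℝ) ≤ n := by
        have : (⌈B / η⌉₊ : ℝ) ≤ (⌈B / η⌉₊ + 1 : ℕ) := by push_cast; linarith
        exact this.trans (by exact_mod_cast hn)
      calc B = (B / η) * η := by field_simp
        _ ≤ (n : ℝ) * η := mul_le_mul_of_nonneg_right (h3.trans h4) hη.le
        _ = η * n := by ring
    calc ‖w ^ n - 1‖ / ‖w - 1‖ ≤ 2 / ‖w - 1‖ :=
          by gcongr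
      _ ≤ η * n := hBn


lemma contA {α : ℝ} (hα : Irrational α) (ψ : ℝ → ℝ) (hc : Continuous ψ)
    (hp : Function.Periodic ψ 1) {ε : ℝ} (hε : 0 < ε) :
    ∃ N : ℕ, ∀ n ≥ N, ∀ x : ℝ,
      |birkhoff α ψ n x - n * ∫ y in (0:ℝ)..1, ψ y| ≤ ε * n := by
  haveI : Fact ((0:ℝ) < 1) := ⟨one_pos⟩
  set Ψ : C(UnitAddCircle, ℂ) :=
    ⟨fun z => ((hp.lift z : ℝ) : ℂ),
      continuous_coinduced_dom.mpr (Complex.continuous_ofReal.comp hc)⟩ with hΨdef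
  have hΨ : ∀ x : ℝ, Ψ ↑x = (ψ x : ℂ) := fun x => by
    simp only [hΨdef, ContinuousMap.coe_mk, Function.Periodic.lift_coe]
  have hmem : Ψ ∈ closure ((Submodule.span ℂ (Set.range (@fourier 1))) : Set C(UnitAddCircle, ℂ)) := by
    rw [← Submodule.topologicalClosure_coe, span_fourier_closure_eq_top]
    trivial
  obtain ⟨P, hPmem, hPdist⟩ := Metric.mem_closure_iff.mp hmem (ε/4) (by positivity)
  obtain ⟨P, hPmem, hPdist⟩ : ∃ P ∈ Submodule.span ℂ (Set.range (@fourier 1)), dist Ψ P < ε/4 :=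
    ⟨P, hPmem, hPdist⟩
  have happrox : ∀ z : UnitAddCircle, ‖Ψ z - P z‖ ≤ ε/4 := by
    intro z
    calc ‖Ψ z - P z‖ = ‖(Ψ - P) z‖ := by simp
      _ ≤ ‖Ψ - P‖ := ContinuousMap.norm_coe_le_norm _ _
      _ ≤ ε/4 := by rw [← dist_eq_norm]; exact hPdist.le
  have hQP : QProp α P := by
    refine Submodule.span_induction (p := fun P _ => QProp α P)
      (fun f hf => ?_) qprop_zero (fun f g _ _ hf hg => qprop_add hf hg)
      (fun c f _ hf => qprop_smul c hf) hPmem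
    obtain ⟨k, rfl⟩ := hf
    exact qprop_fourier hα k
  obtain ⟨N, hN⟩ := hQP (ε/2) (by positivity)
  refine ⟨N, fun n hn x => ?_⟩
  have hΨint : IntervalIntegrable (fun y : ℝ => Ψ ↑y) volume 0 1 :=
    (Ψ.continuous.comp (AddCircle.continuous_mk' 1)).intervalIntegrable _ _
  have hPint : IntervalIntegrable (fun y : ℝ => P ↑y) volume 0 1 :=
    (P.continuous.comp (AddCircle.continuous_mk' 1)).intervalIntegrable _ _
  have split : ((birkhoff α ψ n x : ℝ) : ℂ) - n * ((∫ y in (0:ℝ)..1, ψ y : ℝ) : ℂ)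
      = ((∑ i ∈ Finset.range n, P (↑(x + i * α))) - n * ∫ y in (0:ℝ)..1, P ↑y)
        + (∑ i ∈ Finset.range n, (Ψ (↑(x + i * α)) - P (↑(x + i * α))))
        - n * (∫ y in (0:ℝ)..1, (Ψ ↑y - P ↑y)) := by
    have e1 : ((birkhoff α ψ n x : ℝ) : ℂ) = ∑ i ∈ Finset.range n, Ψ (↑(x + i * α)) := by
      rw [birkhoff]
      push_cast
      exact Finset.sum_congr rfl fun i _ => (hΨ _).symm
    have e2 : ((∫ y in (0:ℝ)..1, ψ y : ℝ) : ℂ) = ∫ y in (0:ℝ)..1, Ψ ↑y := by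
      rw [← intervalIntegral.integral_ofReal]
      exact intervalIntegral.integral_congr fun y _ => (hΨ y).symm
    have e3 : ∫ y in (0:ℝ)..1, (Ψ ↑y - P ↑y) =
        (∫ y in (0:ℝ)..1, Ψ ↑y) - ∫ y in (0:ℝ)..1, P ↑y :=
      intervalIntegral.integral_sub hΨint hPint
    rw [e1, e2, e3, Finset.sum_sub_distrib]
    ring
  have hmid : ‖∑ i ∈ Finset.range n, (Ψ (↑(x + i * α)) - P (↑(x + i * α)))‖ ≤ ε/4 * n := by
    calc ‖∑ i ∈ Finset.range n, (Ψ (↑(x + i * α)) - P (↑(x + i * α)))‖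
        ≤ ∑ i ∈ Finset.range n, ‖Ψ (↑(x + i * α)) - P (↑(x + i * α))‖ := norm_sum_le _ _
      _ ≤ ∑ _i ∈ Finset.range n, (ε/4) := Finset.sum_le_sum fun i _ => happrox _
      _ = ε/4 * n := by rw [Finset.sum_const, Finset.card_range]; ring
  have hlast : ‖(n:ℂ) * (∫ y in (0:ℝ)..1, (Ψ ↑y - P ↑y))‖ ≤ n * (ε/4) := by
    rw [norm_mul]
    have h1 : ‖∫ y in (0:ℝ)..1, (Ψ ↑y - P ↑y)‖ ≤ ε/4 * |1 - 0| :=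
      intervalIntegral.norm_integral_le_of_norm_le_const fun y _ => happrox _
    simp only [sub_zero, abs_one, mul_one] at h1
    calc ‖(n:ℂ)‖ * ‖∫ y in (0:ℝ)..1, (Ψ ↑y - P ↑y)‖ ≤ ‖(n:ℂ)‖ * (ε/4) :=
        mul_le_mul_of_nonneg_left h1 (norm_nonneg _)
      _ = n * (ε/4) := by norm_num
  have habs : |birkhoff α ψ n x - n * ∫ y in (0:ℝ)..1, ψ y|
      = ‖((birkhoff α ψ n x : ℝ) : ℂ) - n * ((∫ y in (0:ℝ)..1, ψ y : ℝ) : ℂ)‖ := by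
    rw [show ((birkhoff α ψ n x : ℝ) : ℂ) - n * ((∫ y in (0:ℝ)..1, ψ y : ℝ) : ℂ)
        = ((birkhoff α ψ n x - n * ∫ y in (0:ℝ)..1, ψ y : ℝ) : ℂ) by push_cast; ring]
    rw [Complex.norm_real, Real.norm_eq_abs]
  rw [habs, split]
  set A := (∑ i ∈ Finset.range n, P (↑(x + i * α))) - n * ∫ y in (0:ℝ)..1, P ↑y with hA
  set B := ∑ i ∈ Finset.range n, (Ψ (↑(x + i * α)) - P (↑(x + i * α))) with hB
  set C := (n:ℂ) * (∫ y in (0:ℝ)..1, (Ψ ↑y - P ↑y)) with hC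
  have t1 : ‖A + B - C‖ ≤ ‖A‖ + ‖B‖ + ‖C‖ := by
    calc ‖A + B - C‖ ≤ ‖A + B‖ + ‖C‖ := norm_sub_le _ _
      _ ≤ ‖A‖ + ‖B‖ + ‖C‖ := by have := norm_add_le A B; linarith
  have hAb : ‖A‖ ≤ ε/2 * n := hN n hn x
  have : ε/2 * n + ε/4 * n + n * (ε/4) = ε * n := by ring
  linarith [hmid, hlast]


end PartA2

noncomputable def dZ (x : ℝ) : ℝ := ‖(↑x : AddCircle (1:ℝ))‖

lemma dZ_cont : Continuous dZ := ((AddCircle.continuous_mk' (1:ℝ))).norm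

lemma coe_int_sub (x : ℝ) (k : ℤ) : ((x - k : ℝ) : AddCircle (1:ℝ)) = (x : AddCircle (1:ℝ)) := by
  have h1 : (((k:ℝ)) : AddCircle (1:ℝ)) = 0 := by
    have : ((k:ℝ)) = k • (1:ℝ) := by simp
    rw [this, QuotientAddGroup.mk_zsmul, AddCircle.coe_period, smul_zero]
  have : ((x - k : ℝ) : AddCircle (1:ℝ)) = (x : AddCircle (1:ℝ)) - (((k:ℝ)) : AddCircle (1:ℝ)) := rfl
  rw [this, h1, sub_zero]

lemma dZ_per : Function.Periodic dZ 1 := by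
  intro x
  unfold dZ
  rw [show x + 1 = x - (-1 : ℤ) by push_cast; ring, coe_int_sub]

lemma dZ_eq_fract (x : ℝ) : dZ x = dZ (Int.fract x) := by
  unfold dZ
  rw [show Int.fract x = x - ⌊x⌋ from rfl, coe_int_sub]

lemma dZ_le_one_sub {x : ℝ} {δ : ℝ} (hδ : δ ≤ 1/2) (h : 1 - δ ≤ Int.fract x) : dZ x ≤ δ := by
  rw [dZ_eq_fract]
  unfold dZ
  rw [show ((Int.fract x : ℝ) : AddCircle (1:ℝ)) = ((Int.fract x - (1:ℤ) : ℝ) : AddCircle (1:ℝ)) by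
    rw [coe_int_sub]]
  have hf1 : Int.fract x < 1 := Int.fract_lt_one x
  have hf0 : 0 ≤ Int.fract x := Int.fract_nonneg x
  have habs : |Int.fract x - (1:ℤ)| ≤ |(1:ℝ)| / 2 := by
    rw [abs_one]
    push_cast
    rw [abs_of_nonpos (by linarith)]
    linarith
  rw [(AddCircle.norm_coe_eq_abs_iff (1:ℝ) one_ne_zero).mpr habs]
  push_cast
  rw [abs_of_nonpos (by linarith)]
  linarith

lemma dZ_le_fract {x : ℝ} {δ : ℝ} (hδ : δ ≤ 1/2) (h : Int.fract x ≤ δ) : dZ x ≤ δ := by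
  rw [dZ_eq_fract]
  unfold dZ
  have hf0 : 0 ≤ Int.fract x := Int.fract_nonneg x
  have habs : |Int.fract x| ≤ |(1:ℝ)| / 2 := by
    rw [abs_one, abs_of_nonneg hf0]; linarith
  rw [(AddCircle.norm_coe_eq_abs_iff (1:ℝ) one_ne_zero).mpr habs, abs_of_nonneg hf0]
  exact h

lemma dZ_ge {x : ℝ} {δ : ℝ} (h1 : 2*δ ≤ x) (h2 : x ≤ 1 - 2*δ) (hδ : 0 < δ) : 2*δ ≤ dZ x := by
  unfold dZ
  rw [AddCircle.norm_eq (1:ℝ)]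
  set k := round (1⁻¹ * x) with hk
  rcases le_or_gt k 0 with h | h
  · have : (k:ℝ) ≤ 0 := by exact_mod_cast h
    calc 2*δ ≤ x - k := by linarith
      _ ≤ |x - k * 1| := by rw [mul_one]; exact le_abs_self _
  · have : (1:ℝ) ≤ (k:ℝ) := by exact_mod_cast h
    calc 2*δ ≤ (k:ℝ) - x := by linarith
      _ ≤ |x - k * 1| := by rw [mul_one, abs_sub_comm]; exact le_abs_self _

section Bump
variable {δ J : ℝ}

noncomputable def bump (J δ : ℝ) (x : ℝ) : ℝ := J * max 0 (min 1 (2 - dZ x / δ))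

lemma bump_cont (hδ : 0 < δ) : Continuous (bump J δ) :=
  continuous_const.mul (continuous_const.max (continuous_const.min
    (continuous_const.sub (dZ_cont.div_const δ))))

lemma bump_per : Function.Periodic (bump J δ) 1 := fun x => by
  unfold bump; rw [dZ_per x]

lemma bump_nonneg (hJ : 0 ≤ J) (x : ℝ) : 0 ≤ bump J δ x :=
  mul_nonneg hJ (le_max_left _ _)

lemma bump_le (hJ : 0 ≤ J) (x : ℝ) : bump J δ x ≤ J := by
  unfold bump
  have h1 : max 0 (min 1 (2 - dZ x / δ)) ≤ 1 :=
    max_le zero_le_one (min_le_left _ _)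
  nlinarith

lemma bump_eq_J (hδ : 0 < δ) (hJ : 0 ≤ J) {x : ℝ} (h : dZ x ≤ δ) : bump J δ x = J := by
  unfold bump
  have h1 : (1:ℝ) ≤ 2 - dZ x / δ := by
    have : dZ x / δ ≤ 1 := by
      rw [div_le_one hδ]; exact h
    linarith
  rw [min_eq_left h1, max_eq_right zero_le_one, mul_one]

lemma bump_eq_zero (hδ : 0 < δ) {x : ℝ} (h : 2*δ ≤ dZ x) : bump J δ x = 0 := by
  unfold bump
  have h1 : 2 - dZ x / δ ≤ 0 := by
    have : 2 ≤ dZ x / δ := by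
      rw [le_div_iff₀ hδ]; linarith
    linarith
  rw [max_eq_left (le_trans (min_le_right _ _) h1), mul_zero]

lemma bump_integral (hδ : 0 < δ) (hδ2 : δ ≤ 1/8) (hJ : 0 ≤ J) :
    (∫ y in (0:ℝ)..1, bump J δ y) ≤ 4*δ*J := by
  have hint : ∀ a b : ℝ, IntervalIntegrable (bump J δ) volume a b :=
    fun a b => (bump_cont hδ).intervalIntegrable a b
  have hsplit : (∫ y in (0:ℝ)..1, bump J δ y)
      = (∫ y in (0:ℝ)..(2*δ), bump J δ y) + (∫ y in (2*δ)..(1-2*δ), bump J δ y)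
        + ∫ y in (1-2*δ)..1, bump J δ y := by
    rw [intervalIntegral.integral_add_adjacent_intervals (hint _ _) (hint _ _),
      intervalIntegral.integral_add_adjacent_intervals (hint _ _) (hint _ _)]
  have hmid : (∫ y in (2*δ)..(1-2*δ), bump J δ y) = 0 := by
    rw [show (0:ℝ) = ∫ y in (2*δ)..(1-2*δ), (0:ℝ) by simp]
    apply intervalIntegral.integral_congr
    intro y hy
    rw [Set.uIcc_of_le (by linarith)] at hy
    exact bump_eq_zero hδ (dZ_ge hy.1 hy.2 hδ)
  have hleft : (∫ y in (0:ℝ)..(2*δ), bump J δ y) ≤ 2*δ*J := by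
    calc (∫ y in (0:ℝ)..(2*δ), bump J δ y) ≤ ∫ _y in (0:ℝ)..(2*δ), J :=
        intervalIntegral.integral_mono_on (by linarith) (hint _ _)
          (intervalIntegrable_const) (fun x _ => bump_le hJ x)
      _ = 2*δ*J := by simp [smul_eq_mul]
  have hright : (∫ y in (1-2*δ)..1, bump J δ y) ≤ 2*δ*J := by
    calc (∫ y in (1-2*δ)..1, bump J δ y) ≤ ∫ _y in (1-2*δ)..1, J :=
        intervalIntegral.integral_mono_on (by linarith) (hint _ _)
          (intervalIntegrable_const) (fun x _ => bump_le hJ x)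
      _ = 2*δ*J := by
          rw [intervalIntegral.integral_const, smul_eq_mul]; ring
  rw [hsplit, hmid]
  linarith

end Bump

section Hup
variable {m : ℝ → ℝ} {δ : ℝ}

/-- The periodized monotone function. -/
noncomputable def TT (m : ℝ → ℝ) (x : ℝ) : ℝ := m (Int.fract x)

lemma TT_per (m : ℝ → ℝ) : Function.Periodic (TT m) 1 := fun x => by
  unfold TT; rw [Int.fract_add_one]

lemma TT_lb (hm : Monotone m) (x : ℝ) : m 0 ≤ TT m x := hm (Int.fract_nonneg x)

lemma TT_ub (hm : Monotone m) (x : ℝ) : TT m x ≤ m 1 := hm (Int.fract_lt_one x).le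

lemma TT_int (hm : Monotone m) : ∀ a b : ℝ, IntervalIntegrable (TT m) volume a b := by
  intro a b
  rw [intervalIntegrable_iff]
  apply Measure.integrableOn_of_bounded (M := max |m 0| |m 1|)
  · exact (measure_Ioc_lt_top).ne
  · exact ((hm.measurable).comp measurable_fract).aestronglyMeasurable
  · apply ae_of_all
    intro x
    rw [Real.norm_eq_abs, abs_le]
    constructor
    · calc -(max |m 0| |m 1|) ≤ -|m 0| := by simp [le_max_left]
        _ ≤ m 0 := neg_abs_le _
        _ ≤ TT m x := TT_lb hm x
    · calc TT m x ≤ m 1 := TT_ub hm x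
        _ ≤ |m 1| := le_abs_self _
        _ ≤ max |m 0| |m 1| := le_max_right _ _

/-- Forward sliding average of the periodized monotone function. -/
noncomputable def hup (m : ℝ → ℝ) (δ : ℝ) (x : ℝ) : ℝ := δ⁻¹ * ∫ t in x..(x+δ), TT m t

lemma hup_eq_F (hm : Monotone m) :
    hup m δ = fun x => δ⁻¹ * ((∫ t in (0:ℝ)..(x+δ), TT m t) - ∫ t in (0:ℝ)..x, TT m t) := by
  funext x
  unfold hup
  rw [intervalIntegral.integral_interval_sub_left (TT_int hm 0 (x+δ)) (TT_int hm 0 x)]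

lemma hup_cont (hm : Monotone m) : Continuous (hup m δ) := by
  rw [hup_eq_F hm]
  have hF : Continuous fun u => ∫ t in (0:ℝ)..u, TT m t :=
    intervalIntegral.continuous_primitive (TT_int hm) 0
  exact continuous_const.mul ((hF.comp (continuous_id.add continuous_const)).sub hF)

lemma hup_per (hm : Monotone m) : Function.Periodic (hup m δ) 1 := by
  intro x
  unfold hup
  congr 1
  calc ∫ t in (x+1)..(x+1+δ), TT m t = ∫ t in x..(x+δ), TT m (t+1) := by
        rw [intervalIntegral.integral_comp_add_right (TT m) 1]
        congr 1 <;> ring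
    _ = ∫ t in x..(x+δ), TT m t := intervalIntegral.integral_congr fun t _ => TT_per m t

lemma hup_lb (hm : Monotone m) (hδ : 0 < δ) (x : ℝ) : m 0 ≤ hup m δ x := by
  unfold hup
  have h1 : δ * m 0 ≤ ∫ t in x..(x+δ), TT m t := by
    calc δ * m 0 = ∫ _t in x..(x+δ), m 0 := by
          rw [intervalIntegral.integral_const, smul_eq_mul]; ring
      _ ≤ _ := intervalIntegral.integral_mono_on (by linarith) intervalIntegrable_const
          (TT_int hm x (x+δ)) (fun t _ => TT_lb hm t)
  calc m 0 = δ⁻¹ * (δ * m 0) := by field_simp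
    _ ≤ δ⁻¹ * ∫ t in x..(x+δ), TT m t :=
        mul_le_mul_of_nonneg_left h1 (inv_nonneg.mpr hδ.le)

lemma hup_ub (hm : Monotone m) (hδ : 0 < δ) (x : ℝ) : hup m δ x ≤ m 1 := by
  unfold hup
  have h1 : (∫ t in x..(x+δ), TT m t) ≤ δ * m 1 := by
    calc (∫ t in x..(x+δ), TT m t) ≤ ∫ _t in x..(x+δ), m 1 :=
          intervalIntegral.integral_mono_on (by linarith) (TT_int hm x (x+δ))
            intervalIntegrable_const (fun t _ => TT_ub hm t)
      _ = δ * m 1 := by rw [intervalIntegral.integral_const, smul_eq_mul]; ring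
  calc δ⁻¹ * ∫ t in x..(x+δ), TT m t ≤ δ⁻¹ * (δ * m 1) :=
        mul_le_mul_of_nonneg_left h1 (inv_nonneg.mpr hδ.le)
    _ = m 1 := by field_simp

lemma hup_ge (hm : Monotone m) (hδ : 0 < δ) {x : ℝ} (hx : Int.fract x < 1 - δ) :
    TT m x ≤ hup m δ x := by
  unfold hup
  have key : ∀ t ∈ Set.Icc x (x+δ), TT m x ≤ TT m t := by
    intro t ht
    have hfx := Int.floor_add_fract x
    have hfl : ⌊t⌋ = ⌊x⌋ := by
      rw [Int.floor_eq_iff]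
      constructor
      · calc ((⌊x⌋:ℤ):ℝ) ≤ x := Int.floor_le x
          _ ≤ t := ht.1
      · push_cast
        linarith [ht.2]
    unfold TT
    apply hm
    rw [Int.fract, Int.fract, hfl]
    simp only [sub_le_sub_iff_right]
    exact ht.1
  have h1 : δ * TT m x ≤ ∫ t in x..(x+δ), TT m t := by
    calc δ * TT m x = ∫ _t in x..(x+δ), TT m x := by
          rw [intervalIntegral.integral_const, smul_eq_mul]; ring
      _ ≤ _ := intervalIntegral.integral_mono_on (by linarith) intervalIntegrable_const
          (TT_int hm x (x+δ)) key
  calc TT m x = δ⁻¹ * (δ * TT m x) := by field_simp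
    _ ≤ _ := mul_le_mul_of_nonneg_left h1 (inv_nonneg.mpr hδ.le)

lemma ldown_le (hm : Monotone m) (hδ : 0 < δ) {x : ℝ} (hx : δ ≤ Int.fract x) :
    hup m δ (x - δ) ≤ TT m x := by
  unfold hup
  rw [sub_add_cancel]
  have key : ∀ t ∈ Set.Icc (x-δ) x, TT m t ≤ TT m x := by
    intro t ht
    have hfx := Int.floor_add_fract x
    have hfl : ⌊t⌋ = ⌊x⌋ := by
      rw [Int.floor_eq_iff]
      constructor
      · push_cast
        linarith [ht.1]
      · push_cast
        linarith [ht.2, Int.fract_lt_one x]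
    unfold TT
    apply hm
    rw [Int.fract, Int.fract, hfl]
    simp only [sub_le_sub_iff_right]
    exact ht.2
  have h1 : (∫ t in (x-δ)..x, TT m t) ≤ δ * TT m x := by
    calc (∫ t in (x-δ)..x, TT m t) ≤ ∫ _t in (x-δ)..x, TT m x :=
          intervalIntegral.integral_mono_on (by linarith) (TT_int hm _ _)
            intervalIntegrable_const key
      _ = δ * TT m x := by rw [intervalIntegral.integral_const, smul_eq_mul]; ring
  calc δ⁻¹ * ∫ t in (x-δ)..x, TT m t ≤ δ⁻¹ * (δ * TT m x) :=
        mul_le_mul_of_nonneg_left h1 (inv_nonneg.mpr hδ.le)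
    _ = TT m x := by field_simp

end Hup

section HupInt
variable {m : ℝ → ℝ} {δ : ℝ}

lemma hup_integral (hm : Monotone m) (hδ : 0 < δ) :
    (∫ y in (0:ℝ)..1, hup m δ y) = ∫ y in (0:ℝ)..1, TT m y := by
  set F : ℝ → ℝ := fun u => ∫ t in (0:ℝ)..u, TT m t with hF
  have hFc : Continuous F := intervalIntegral.continuous_primitive (TT_int hm) 0
  have hFint : ∀ a b : ℝ, IntervalIntegrable F volume a b := fun a b =>
    hFc.intervalIntegrable a b
  have e0 : (∫ y in (0:ℝ)..1, hup m δ y) = δ⁻¹ * ∫ y in (0:ℝ)..1, (F (y+δ) - F y) := by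
    rw [← intervalIntegral.integral_const_mul]
    apply intervalIntegral.integral_congr
    intro y _
    rw [hup_eq_F hm]
  have e1 : (∫ y in (0:ℝ)..1, (F (y+δ) - F y)) = (∫ y in (0:ℝ)..1, F (y+δ)) - ∫ y in (0:ℝ)..1, F y :=
    intervalIntegral.integral_sub
      ((hFc.comp (continuous_id.add continuous_const)).intervalIntegrable _ _) (hFint _ _)
  have e2 : (∫ y in (0:ℝ)..1, F (y+δ)) = ∫ y in δ..(1+δ), F y := by
    rw [intervalIntegral.integral_comp_add_right F δ]
    congr 1
    ring
  have e3 : (∫ y in δ..(1+δ), F y) - (∫ y in (0:ℝ)..1, F y)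
      = (∫ y in (1:ℝ)..(1+δ), F y) - ∫ y in (0:ℝ)..δ, F y := by
    have c1 : (∫ y in δ..(1:ℝ), F y) + (∫ y in (1:ℝ)..(1+δ), F y) = ∫ y in δ..(1+δ), F y :=
      intervalIntegral.integral_add_adjacent_intervals (hFint _ _) (hFint _ _)
    have c2 : (∫ y in (0:ℝ)..δ, F y) + (∫ y in δ..(1:ℝ), F y) = ∫ y in (0:ℝ)..1, F y :=
      intervalIntegral.integral_add_adjacent_intervals (hFint _ _) (hFint _ _)
    linarith
  have e4 : (∫ y in (1:ℝ)..(1+δ), F y) = ∫ y in (0:ℝ)..δ, F (y+1) := by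
    rw [intervalIntegral.integral_comp_add_right F 1]
    norm_num
    congr 1
    ring
  have e5 : (∫ y in (0:ℝ)..δ, F (y+1)) - (∫ y in (0:ℝ)..δ, F y)
      = ∫ y in (0:ℝ)..δ, (F (y+1) - F y) :=
    (intervalIntegral.integral_sub
      ((hFc.comp (continuous_id.add continuous_const)).intervalIntegrable _ _) (hFint _ _)).symm
  have e6 : ∀ y : ℝ, F (y+1) - F y = ∫ t in (0:ℝ)..1, TT m t := by
    intro y
    rw [hF]
    rw [intervalIntegral.integral_interval_sub_left (TT_int hm 0 (y+1)) (TT_int hm 0 y)]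
    have := (TT_per m).intervalIntegral_add_eq y 0
    simpa using this
  have e7 : (∫ y in (0:ℝ)..δ, (F (y+1) - F y)) = δ * ∫ t in (0:ℝ)..1, TT m t := by
    rw [intervalIntegral.integral_congr (g := fun _ => ∫ t in (0:ℝ)..1, TT m t)
      (fun y _ => e6 y)]
    rw [intervalIntegral.integral_const, smul_eq_mul]
    ring
  rw [e0, e1, e2, e3, e4, e5, e7]
  field_simp

lemma ldown_integral (hm : Monotone m) (hδ : 0 < δ) :
    (∫ y in (0:ℝ)..1, hup m δ (y - δ)) = ∫ y in (0:ℝ)..1, TT m y := by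
  have e1 : (∫ y in (0:ℝ)..1, hup m δ (y - δ)) = ∫ y in (-δ)..(1-δ), hup m δ y := by
    rw [show (fun y => hup m δ (y - δ)) = fun y => hup m δ (y + (-δ)) by funext y; ring_nf]
    rw [intervalIntegral.integral_comp_add_right (hup m δ) (-δ)]
    congr 1 <;> ring
  have e2 : (∫ y in (-δ)..(1-δ), hup m δ y) = ∫ y in (0:ℝ)..1, hup m δ y := by
    have := (hup_per hm (δ := δ)).intervalIntegral_add_eq (-δ) 0
    simp only [neg_add_cancel_comm_assoc, zero_add] at this
    calc (∫ y in (-δ)..(1-δ), hup m δ y) = ∫ y in (-δ)..(-δ+1), hup m δ y := by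
          congr 1; ring
      _ = ∫ y in (0:ℝ)..(0+1), hup m δ y := (hup_per hm).intervalIntegral_add_eq (-δ) 0
      _ = ∫ y in (0:ℝ)..1, hup m δ y := by norm_num
  rw [e1, e2, hup_integral hm hδ]

end HupInt

lemma mono_sandwich (m : ℝ → ℝ) (hm : Monotone m) {ε : ℝ} (hε : 0 < ε) :
    ∃ l h : ℝ → ℝ, Continuous l ∧ Continuous h ∧
      Function.Periodic l 1 ∧ Function.Periodic h 1 ∧
      (∀ x, l x ≤ TT m x) ∧ (∀ x, TT m x ≤ h x) ∧
      (∫ y in (0:ℝ)..1, h y) ≤ (∫ y in (0:ℝ)..1, TT m y) + ε ∧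
      (∫ y in (0:ℝ)..1, TT m y) - ε ≤ ∫ y in (0:ℝ)..1, l y := by
  set J : ℝ := m 1 - m 0 with hJdef
  have hJ : 0 ≤ J := sub_nonneg.mpr (hm (by norm_num))
  set δ : ℝ := min (1/8) (ε/(8*(J+1))) with hδdef
  have hδ0 : 0 < δ := lt_min (by norm_num) (by positivity)
  have hδ8 : δ ≤ 1/8 := min_le_left _ _
  have hδ2 : δ ≤ 1/2 := hδ8.trans (by norm_num)
  have hδε : 4*δ*J ≤ ε := by
    have h1 : δ ≤ ε/(8*(J+1)) := min_le_right _ _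
    have h2 : 4*δ*J ≤ 4*(ε/(8*(J+1)))*(J+1) := by
      apply mul_le_mul
      · nlinarith
      · linarith
      · exact hJ
      · positivity
    have h3 : 4*(ε/(8*(J+1)))*(J+1) = ε/2 := by field_simp; ring
    nlinarith
  refine ⟨fun x => hup m δ (x - δ) - bump J δ x, fun x => hup m δ x + bump J δ x,
    ?_, ?_, ?_, ?_, ?_, ?_, ?_, ?_⟩
  · exact ((hup_cont hm).comp (continuous_id.sub continuous_const)).sub (bump_cont hδ0)
  · exact (hup_cont hm).add (bump_cont hδ0)
  · intro x
    simp only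
    rw [show x + 1 - δ = (x - δ) + 1 by ring, hup_per hm _, bump_per x]
  · intro x
    simp only
    rw [hup_per hm x, bump_per x]
  · -- lower bound
    intro x
    rcases le_or_gt δ (Int.fract x) with h | h
    · have := ldown_le hm hδ0 h
      have := bump_nonneg (δ := δ) hJ x
      simp only
      linarith
    · have hb : bump J δ x = J := bump_eq_J hδ0 hJ (dZ_le_fract hδ2 h.le)
      have h1 : hup m δ (x - δ) ≤ m 1 := hup_ub hm hδ0 _
      have h2 : m 0 ≤ TT m x := TT_lb hm x
      simp only
      rw [hb]
      simp only [hJdef]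
      linarith
  · -- upper bound
    intro x
    rcases lt_or_ge (Int.fract x) (1 - δ) with h | h
    · have := hup_ge hm hδ0 h
      have := bump_nonneg (δ := δ) hJ x
      simp only
      linarith
    · have hb : bump J δ x = J := bump_eq_J hδ0 hJ (dZ_le_one_sub hδ2 h)
      have h1 : m 0 ≤ hup m δ x := hup_lb hm hδ0 x
      have h2 : TT m x ≤ m 1 := TT_ub hm x
      simp only
      rw [hb]
      simp only [hJdef]
      linarith
  · -- integral upper
    have e1 : (∫ y in (0:ℝ)..1, (hup m δ y + bump J δ y))
        = (∫ y in (0:ℝ)..1, hup m δ y) + ∫ y in (0:ℝ)..1, bump J δ y :=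
      intervalIntegral.integral_add ((hup_cont hm).intervalIntegrable _ _)
        ((bump_cont hδ0).intervalIntegrable _ _)
    rw [e1, hup_integral hm hδ0]
    have := bump_integral hδ0 (hδ8.trans (by norm_num)) hJ
    linarith
  · -- integral lower
    have e1 : (∫ y in (0:ℝ)..1, (hup m δ (y - δ) - bump J δ y))
        = (∫ y in (0:ℝ)..1, hup m δ (y - δ)) - ∫ y in (0:ℝ)..1, bump J δ y :=
      intervalIntegral.integral_sub
        (((hup_cont hm).comp (continuous_id.sub continuous_const)).intervalIntegrable _ _)
        ((bump_cont hδ0).intervalIntegrable _ _)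
    rw [e1, ldown_integral hm hδ0]
    have := bump_integral hδ0 (hδ8.trans (by norm_num)) hJ
    linarith


lemma main_pos {α : ℝ} (hα : Irrational α) (φ : ℝ → ℝ)
    (hper : Function.Periodic φ 1) (hbv : BoundedVariationOn φ (Set.Icc 0 1))
    {ε : ℝ} (hε : 0 < ε) :
    ∃ N : ℕ, 1 ≤ N ∧ ∀ n ≥ N, ∀ x : ℝ,
      |birkhoff α φ n x - n * ∫ y in (0:ℝ)..1, φ y| < ε * n := by
  obtain ⟨p, q, hp, hq, hpq⟩ := hbv.locallyBoundedVariationOn.exists_monotoneOn_sub_monotoneOn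
  set c : ℝ → ℝ := fun y => max 0 (min 1 y) with hc
  have hcmem : ∀ y, c y ∈ Set.Icc (0:ℝ) 1 :=
    fun y => ⟨le_max_left _ _, max_le (by norm_num) (min_le_left _ _)⟩
  have hcmono : Monotone c := fun a b hab => max_le_max le_rfl (min_le_min le_rfl hab)
  have hcid : ∀ y ∈ Set.Ico (0:ℝ) 1, c y = y := fun y hy => by
    rw [hc]; simp only; rw [min_eq_right hy.2.le, max_eq_right hy.1]
  set P : ℝ → ℝ := p ∘ c with hPdef
  set Q : ℝ → ℝ := q ∘ c with hQdef
  have hPmono : Monotone P := fun a b hab => hp (hcmem a) (hcmem b) (hcmono hab)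
  have hQmono : Monotone Q := fun a b hab => hq (hcmem a) (hcmem b) (hcmono hab)
  have hφTT : ∀ x : ℝ, φ x = TT P x - TT Q x := by
    intro x
    have hfr : Int.fract x ∈ Set.Ico (0:ℝ) 1 := ⟨Int.fract_nonneg x, Int.fract_lt_one x⟩
    have h1 : φ (Int.fract x) = φ x := by
      rw [show Int.fract x = x - (⌊x⌋:ℝ) * 1 by rw [mul_one, Int.self_sub_floor]]
      exact hper.sub_int_mul_eq ⌊x⌋
    have h2 : φ (Int.fract x) = p (Int.fract x) - q (Int.fract x) := by
      rw [hpq]; rfl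
    unfold TT
    rw [← h1, h2, hPdef, hQdef]
    simp only [Function.comp_apply]
    rw [hcid _ hfr]
  have hIφ : (∫ y in (0:ℝ)..1, φ y)
      = (∫ y in (0:ℝ)..1, TT P y) - ∫ y in (0:ℝ)..1, TT Q y := by
    rw [← intervalIntegral.integral_sub (TT_int hPmono 0 1) (TT_int hQmono 0 1)]
    exact intervalIntegral.integral_congr fun y _ => hφTT y
  set Iφ : ℝ := ∫ y in (0:ℝ)..1, φ y with hIφdef
  have hε1 : (0:ℝ) < ε/8 := by positivity
  obtain ⟨lP, hP2, hlPc, hhPc, hlPper, hhPper, hlPle, hhPge, hIntHP, hIntLP⟩ :=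
    mono_sandwich P hPmono hε1
  obtain ⟨lQ, hQ2, hlQc, hhQc, hlQper, hhQper, hlQle, hhQge, hIntHQ, hIntLQ⟩ :=
    mono_sandwich Q hQmono hε1
  set U : ℝ → ℝ := fun y => hP2 y - lQ y with hUdef
  set L : ℝ → ℝ := fun y => lP y - hQ2 y with hLdef
  have hUc : Continuous U := hhPc.sub hlQc
  have hLc : Continuous L := hlPc.sub hhQc
  have hUper : Function.Periodic U 1 := fun y => by
    simp only [hUdef]; rw [hhPper y, hlQper y]
  have hLper : Function.Periodic L 1 := fun y => by
    simp only [hLdef]; rw [hlPper y, hhQper y]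
  have hφU : ∀ y, φ y ≤ U y := fun y => by
    rw [hφTT y, hUdef]
    exact sub_le_sub (hhPge y) (hlQle y)
  have hLφ : ∀ y, L y ≤ φ y := fun y => by
    rw [hφTT y, hLdef]
    exact sub_le_sub (hlPle y) (hhQge y)
  have hIntU : (∫ y in (0:ℝ)..1, U y) ≤ Iφ + 2*(ε/8) := by
    rw [hUdef, intervalIntegral.integral_sub (hhPc.intervalIntegrable _ _)
      (hlQc.intervalIntegrable _ _), hIφ]
    linarith
  have hIntL : Iφ - 2*(ε/8) ≤ ∫ y in (0:ℝ)..1, L y := by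
    rw [hLdef, intervalIntegral.integral_sub (hlPc.intervalIntegrable _ _)
      (hhQc.intervalIntegrable _ _), hIφ]
    linarith
  obtain ⟨NU, hNU⟩ := contA hα U hUc hUper hε1
  obtain ⟨NL, hNL⟩ := contA hα L hLc hLper hε1
  refine ⟨max (max NU NL) 1, le_max_right _ _, fun n hn x => ?_⟩
  have hn1 : 1 ≤ n := le_trans (le_max_right _ _) hn
  have hnU : NU ≤ n := le_trans (le_trans (le_max_left _ _) (le_max_left _ _)) hn
  have hnL : NL ≤ n := le_trans (le_trans (le_max_right _ _) (le_max_left _ _)) hn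
  have hnR : (1:ℝ) ≤ (n:ℝ) := by exact_mod_cast hn1
  have hupper : birkhoff α φ n x ≤ n * Iφ + 3*(ε/8)*n := by
    have s1 : birkhoff α φ n x ≤ birkhoff α U n x :=
      Finset.sum_le_sum fun i _ => hφU _
    have s2 := hNU n hnU x
    rw [abs_le] at s2
    have s3 : (n:ℝ) * (∫ y in (0:ℝ)..1, U y) ≤ (n:ℝ) * (Iφ + 2*(ε/8)) :=
      mul_le_mul_of_nonneg_left hIntU (by linarith)
    have : birkhoff α U n x ≤ (n:ℝ) * (∫ y in (0:ℝ)..1, U y) + (ε/8) * n := by linarith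
    nlinarith
  have hlower : n * Iφ - 3*(ε/8)*n ≤ birkhoff α φ n x := by
    have s1 : birkhoff α L n x ≤ birkhoff α φ n x :=
      Finset.sum_le_sum fun i _ => hLφ _
    have s2 := hNL n hnL x
    rw [abs_le] at s2
    have s3 : (n:ℝ) * (Iφ - 2*(ε/8)) ≤ (n:ℝ) * (∫ y in (0:ℝ)..1, L y) :=
      mul_le_mul_of_nonneg_left hIntL (by linarith)
    have : (n:ℝ) * (∫ y in (0:ℝ)..1, L y) - (ε/8) * n ≤ birkhoff α L n x := by linarith
    nlinarith
  have hkey : 3*(ε/8)*(n:ℝ) < ε*n := by nlinarith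
  rw [abs_lt]
  constructor <;> linarith

/-- Uniform ergodic averaging for BV functions over an irrational rotation: for every `ε > 0`
there is `n_ε` such that for all `|n| ≥ n_ε` and all `x`,
`|φ^{(n)}(x) − n ∫ φ| < ε |n|`. -/
theorem bv_uniform_birkhoff (α : ℝ) (hα : Irrational α) (φ : ℝ → ℝ)
    (hper : Function.Periodic φ 1) (hbv : BoundedVariationOn φ (Set.Icc 0 1)) :
    ∀ ε > 0, ∃ nε : ℕ, ∀ n : ℤ, (nε : ℤ) ≤ |n| → ∀ x : ℝ,
      |birkhoffZ α φ n x - (n : ℝ) * ∫ y in (0:ℝ)..1, φ y| < ε * |(n : ℝ)| := by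
  intro ε hε
  obtain ⟨N, hN1, hN⟩ := main_pos hα φ hper hbv hε
  refine ⟨N, fun n hn x => ?_⟩
  rcases le_or_gt 0 n with h | h
  · have hb : birkhoffZ α φ n x = birkhoff α φ n.toNat x := if_pos h
    have hcast : ((n.toNat : ℕ) : ℝ) = (n : ℝ) := by
      exact_mod_cast congrArg (Int.cast : ℤ → ℝ) (Int.toNat_of_nonneg h)
    have habs : |(n:ℝ)| = ((n.toNat : ℕ) : ℝ) := by
      rw [hcast, abs_of_nonneg]
      exact_mod_cast h
    have hge : N ≤ n.toNat := by
      rw [abs_of_nonneg h] at hn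
      omega
    rw [hb, habs, ← hcast]
    exact hN n.toNat hge x
  · have hneg : (0:ℤ) ≤ -n := by linarith
    have hmn : (((-n).toNat : ℤ)) = -n := Int.toNat_of_nonneg hneg
    have hb : birkhoffZ α φ n x
        = -birkhoff α φ (-n).toNat (x - ((-n).toNat : ℝ) * α) := if_neg (not_le.mpr h)
    have hcast : (((-n).toNat : ℕ) : ℝ) = -(n : ℝ) := by
      exact_mod_cast congrArg (Int.cast : ℤ → ℝ) hmn
    have habs : |(n:ℝ)| = (((-n).toNat : ℕ) : ℝ) := by
      rw [hcast, abs_of_neg]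
      exact_mod_cast h
    have hge : N ≤ (-n).toNat := by
      rw [abs_of_neg h] at hn
      omega
    have hflip : birkhoffZ α φ n x - (n : ℝ) * ∫ y in (0:ℝ)..1, φ y
        = -(birkhoff α φ (-n).toNat (x - ((-n).toNat : ℝ) * α)
            - (((-n).toNat : ℕ) : ℝ) * ∫ y in (0:ℝ)..1, φ y) := by
      rw [hb, hcast]
      ring
    rw [hflip, abs_neg, habs]
    exact hN (-n).toNat hge _
end

section
/- Let β be irrational with denominators (q'_n). Fix y, y' ∈ 𝕋 with ‖y − y'‖ < 1/(6 q'_n). Then at least one of the following holds: (i) 0 ∉ ⋃_{k=0}^{⌊q'_{n+1}/6⌋} R_β^k[y, y']; (ii) 0 ∉ ⋃_{k=0}^{⌊q'_{n+1}/6⌋} R_β^{−k}[y, y']; (iii) 0 ∈ ⋃_{k=0}^{q'_n − 1} R_β^k[y, y']. -/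
open GenContFract in
private theorem cf_not_term (β : ℝ) (hβ : Irrational β) (n : ℕ) :
    ¬(GenContFract.of β).TerminatedAt n := by
  intro h
  rcases (GenContFract.terminates_iff_rat β).1 ⟨n, h⟩ with ⟨q, hq⟩
  exact (Rat.not_irrational q) (hq ▸ hβ)

private theorem cf_s_some (β : ℝ) (hβ : Irrational β) (n : ℕ) :
    ∃ z : ℤ, 1 ≤ z ∧ (GenContFract.of β).s.get? n = some ⟨1, (z : ℝ)⟩ := by
  obtain ⟨gp, hgp⟩ := Option.ne_none_iff_exists'.1 (cf_not_term β hβ n)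
  obtain ⟨ha, z, hz⟩ := GenContFract.of_partNum_eq_one_and_exists_int_partDen_eq hgp
  have h1 : (1:ℝ) ≤ gp.b :=
    GenContFract.of_one_le_get?_partDen (GenContFract.partDen_eq_s_b hgp)
  refine ⟨z, by exact_mod_cast hz ▸ h1, ?_⟩
  have : gp = ⟨1, (z:ℝ)⟩ := by cases gp; simp_all
  rwa [this] at hgp

private theorem cf_num_int (β : ℝ) (hβ : Irrational β) :
    ∀ n, ∃ p : ℤ, ((p : ℤ) : ℝ) = (GenContFract.of β).nums n := by
  have key : ∀ n, (∃ p : ℤ, ((p:ℤ):ℝ) = (GenContFract.of β).nums n) ∧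
      (∃ p : ℤ, ((p:ℤ):ℝ) = (GenContFract.of β).nums (n+1)) := by
    intro n
    induction n with
    | zero =>
      constructor
      · exact ⟨⌊β⌋, by rw [GenContFract.zeroth_num_eq_h, GenContFract.of_h_eq_floor]⟩
      · obtain ⟨z, hz1, hz⟩ := cf_s_some β hβ 0
        refine ⟨z * ⌊β⌋ + 1, ?_⟩
        rw [GenContFract.first_num_eq hz, GenContFract.of_h_eq_floor]
        push_cast
        ring
    | succ n ih =>
      obtain ⟨⟨p0, hp0⟩, ⟨p1, hp1⟩⟩ := ih
      obtain ⟨z, hz1, hz⟩ := cf_s_some β hβ (n+1)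
      refine ⟨⟨p1, hp1⟩, ⟨z * p1 + p0, ?_⟩⟩
      rw [GenContFract.nums_recurrence hz hp0.symm hp1.symm]
      push_cast
      ring
  exact fun n => (key n).1

private theorem cf_dens_one_le (β : ℝ) : ∀ k, (1:ℝ) ≤ (GenContFract.of β).dens k := by
  intro k
  induction k with
  | zero => rw [GenContFract.zeroth_den_eq_one]
  | succ k ih => exact le_trans ih GenContFract.of_den_mono

private theorem cf_dens_add (β : ℝ) (hβ : Irrational β) (k : ℕ) :
    (GenContFract.of β).dens k + (GenContFract.of β).dens (k+1) ≤
      (GenContFract.of β).dens (k+2) := by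
  obtain ⟨z, hz1, hz⟩ := cf_s_some β hβ (k+1)
  rw [GenContFract.dens_recurrence hz rfl rfl]
  dsimp only
  have h1 : (1:ℝ) ≤ (z:ℝ) := by exact_mod_cast hz1
  have h2 := cf_dens_one_le β (k+1)
  nlinarith

private theorem cf_q_one_le (β : ℝ) (q' : ℕ → ℕ) (hq : IsCFDenoms β q') (k : ℕ) :
    1 ≤ q' k := by
  have := cf_dens_one_le β k
  rw [← hq k] at this
  exact_mod_cast this

private theorem cf_q_pos (β : ℝ) (q' : ℕ → ℕ) (hq : IsCFDenoms β q') (k : ℕ) :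
    (0:ℝ) < (q' k : ℝ) := by
  have h : 0 < q' k := cf_q_one_le β q' hq k
  exact_mod_cast h

private theorem cf_irr_ne (β : ℝ) (hβ : Irrational β) (c : ℤ) (hc : 0 < c) (z : ℤ) :
    (c:ℝ) * β ≠ (z:ℝ) := by
  intro h
  rw [irrational_iff_ne_rational] at hβ
  apply hβ z c hc.ne'
  have hc0 : (c:ℝ) ≠ 0 := by exact_mod_cast hc.ne'
  rw [eq_div_iff hc0]
  linarith [h]

private theorem cf_theta_le (β : ℝ) (hβ : Irrational β) (q' : ℕ → ℕ) (hq : IsCFDenoms β q')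
    (p : ℕ → ℤ) (hp : ∀ k, ((p k : ℤ) : ℝ) = (GenContFract.of β).nums k) (k : ℕ) :
    |(q' k : ℝ) * β - (p k : ℝ)| ≤ 1 / (q' (k+1) : ℝ) := by
  have h1 := GenContFract.abs_sub_convs_le (v := β) (n := k) (cf_not_term β hβ k)
  rw [GenContFract.conv_eq_num_div_den] at h1
  have hd0 : (0:ℝ) < (GenContFract.of β).dens k := lt_of_lt_of_le one_pos (cf_dens_one_le β k)
  have hd1 : (0:ℝ) < (GenContFract.of β).dens (k+1) :=
    lt_of_lt_of_le one_pos (cf_dens_one_le β (k+1))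
  rw [hq k, hp k, hq (k+1)]
  have key : (q' k : ℝ) * β - ((p k : ℤ) : ℝ) =
      (GenContFract.of β).dens k * (β - (GenContFract.of β).nums k / (GenContFract.of β).dens k) := by
    rw [hq k, hp k]
    field_simp
  rw [hq k, hp k] at key
  rw [key, abs_mul, abs_of_pos hd0]
  calc (GenContFract.of β).dens k * |β - (GenContFract.of β).nums k / (GenContFract.of β).dens k|
      ≤ (GenContFract.of β).dens k *
        (1 / ((GenContFract.of β).dens k * (GenContFract.of β).dens (k+1))) :=
        mul_le_mul_of_nonneg_left h1 hd0.le
    _ = 1 / (GenContFract.of β).dens (k+1) := by field_simp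

private theorem cf_q_mono (β : ℝ) (q' : ℕ → ℕ) (hq : IsCFDenoms β q') (k : ℕ) :
    (q' k : ℝ) ≤ (q' (k+1) : ℝ) := by
  rw [hq k, hq (k+1)]; exact GenContFract.of_den_mono

private theorem cf_q_add (β : ℝ) (hβ : Irrational β) (q' : ℕ → ℕ) (hq : IsCFDenoms β q')
    (k : ℕ) : (q' k : ℝ) + (q' (k+1) : ℝ) ≤ (q' (k+2) : ℝ) := by
  rw [hq k, hq (k+1), hq (k+2)]; exact cf_dens_add β hβ k

private theorem cf_theta_lt (β : ℝ) (hβ : Irrational β) (q' : ℕ → ℕ) (hq : IsCFDenoms β q')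
    (p : ℕ → ℤ) (hp : ∀ k, ((p k : ℤ) : ℝ) = (GenContFract.of β).nums k) (k : ℕ) :
    |(q' k : ℝ) * β - (p k : ℝ)| < 1 / (q' (k+1) : ℝ) := by
  rcases lt_or_eq_of_le (cf_theta_le β hβ q' hq p hp k) with h | h
  · exact h
  · exfalso
    have hQ1 : (0:ℝ) < (q' (k+1) : ℝ) := cf_q_pos β q' hq (k+1)
    have habs : |(q' (k+1) : ℝ) * ((q' k : ℝ) * β - (p k : ℝ))| = 1 := by
      rw [abs_mul, abs_of_pos hQ1, h]
      field_simp
    rcases (abs_eq (by norm_num : (0:ℝ) ≤ 1)).1 habs with h2 | h2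
    · exact cf_irr_ne β hβ ((q' (k+1) : ℤ) * (q' k : ℤ))
        (by exact_mod_cast Nat.mul_pos (cf_q_one_le β q' hq (k+1)) (cf_q_one_le β q' hq k)) ((q' (k+1) : ℤ) * p k + 1) (by push_cast; linarith [h2])
    · exact cf_irr_ne β hβ ((q' (k+1) : ℤ) * (q' k : ℤ))
        (by exact_mod_cast Nat.mul_pos (cf_q_one_le β q' hq (k+1)) (cf_q_one_le β q' hq k)) ((q' (k+1) : ℤ) * p k - 1) (by push_cast; linarith [h2])

private theorem cf_det (β : ℝ) (hβ : Irrational β) (q' : ℕ → ℕ) (hq : IsCFDenoms β q')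
    (p : ℕ → ℤ) (hp : ∀ k, ((p k : ℤ) : ℝ) = (GenContFract.of β).nums k) (k : ℕ) :
    (p k : ℝ) * (q' (k+1) : ℝ) - (q' k : ℝ) * (p (k+1) : ℝ) = (-1:ℝ)^(k+1) := by
  rw [hp k, hq k, hp (k+1), hq (k+1)]
  exact SimpContFract.determinant (s := SimpContFract.of β) (cf_not_term β hβ k)

private theorem cf_Dtheta (β : ℝ) (hβ : Irrational β) (q' : ℕ → ℕ) (hq : IsCFDenoms β q')
    (p : ℕ → ℤ) (hp : ∀ k, ((p k : ℤ) : ℝ) = (GenContFract.of β).nums k) (k : ℕ) :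
    |(q' k : ℝ) * ((q' (k+1) : ℝ) * β - (p (k+1) : ℝ)) -
      (q' (k+1) : ℝ) * ((q' k : ℝ) * β - (p k : ℝ))| = 1 := by
  have h := cf_det β hβ q' hq p hp k
  have : (q' k : ℝ) * ((q' (k+1) : ℝ) * β - (p (k+1) : ℝ)) -
      (q' (k+1) : ℝ) * ((q' k : ℝ) * β - (p k : ℝ)) = (-1:ℝ)^(k+1) := by
    linear_combination h
  rw [this, abs_pow, abs_neg, abs_one, one_pow]

private theorem cf_sign (β : ℝ) (hβ : Irrational β) (q' : ℕ → ℕ) (hq : IsCFDenoms β q')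
    (p : ℕ → ℤ) (hp : ∀ k, ((p k : ℤ) : ℝ) = (GenContFract.of β).nums k) (k : ℕ) :
    ((q' (k+1) : ℝ) * β - (p (k+1) : ℝ)) * ((q' k : ℝ) * β - (p k : ℝ)) < 0 := by
  by_contra hcon
  push_neg at hcon
  set t1 := (q' (k+1) : ℝ) * β - (p (k+1) : ℝ) with ht1
  set t0 := (q' k : ℝ) * β - (p k : ℝ) with ht0
  have hQ0 := cf_q_pos β q' hq k
  have hQ1 := cf_q_pos β q' hq (k+1)
  have hQ2 := cf_q_pos β q' hq (k+2)
  -- |Q k * t1| < 1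
  have hb1 : (q' k : ℝ) * |t1| < 1 := by
    have h1 : |t1| ≤ 1 / (q' (k+2) : ℝ) := cf_theta_le β hβ q' hq p hp (k+1)
    have h2 : (q' k : ℝ) < (q' (k+2) : ℝ) := by
      have := cf_q_add β hβ q' hq k
      linarith
    calc (q' k : ℝ) * |t1| ≤ (q' k : ℝ) * (1 / (q' (k+2) : ℝ)) :=
          mul_le_mul_of_nonneg_left h1 hQ0.le
      _ < 1 := by rw [mul_one_div, div_lt_one hQ2]; exact h2
  have hb0 : (q' (k+1) : ℝ) * |t0| < 1 := by
    have h1 : |t0| < 1 / (q' (k+1) : ℝ) := cf_theta_lt β hβ q' hq p hp k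
    calc (q' (k+1) : ℝ) * |t0| < (q' (k+1) : ℝ) * (1 / (q' (k+1) : ℝ)) :=
          mul_lt_mul_of_pos_left h1 hQ1
      _ = 1 := by field_simp
  have habs := cf_Dtheta β hβ q' hq p hp k
  rw [← ht1, ← ht0] at habs
  set x := (q' k : ℝ) * t1 with hx
  set y := (q' (k+1) : ℝ) * t0 with hy
  have hxy : 0 ≤ x * y := by
    have : x * y = ((q' k : ℝ) * (q' (k+1) : ℝ)) * (t1 * t0) := by ring
    rw [this]
    exact mul_nonneg (by positivity) hcon
  have hx1 : |x| < 1 := by rw [hx, abs_mul, abs_of_pos hQ0]; exact hb1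
  have hy1 : |y| < 1 := by rw [hy, abs_mul, abs_of_pos hQ1]; exact hb0
  rw [abs_lt] at hx1 hy1
  rcases (abs_eq (by norm_num : (0:ℝ) ≤ 1)).1 habs with h2 | h2
  · have hxpos : 0 < x := by linarith
    have hyneg : y < 0 := by linarith
    nlinarith [mul_pos hxpos (neg_pos.2 hyneg)]
  · have hxneg : x < 0 := by linarith
    have hypos : 0 < y := by linarith
    nlinarith [mul_pos (neg_pos.2 hxneg) hypos]

private theorem cf_theta_low (β : ℝ) (hβ : Irrational β) (q' : ℕ → ℕ) (hq : IsCFDenoms β q')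
    (p : ℕ → ℤ) (hp : ∀ k, ((p k : ℤ) : ℝ) = (GenContFract.of β).nums k) (k : ℕ) :
    1 / (2 * (q' (k+1) : ℝ)) ≤ |(q' k : ℝ) * β - (p k : ℝ)| := by
  have hQ0 := cf_q_pos β q' hq k
  have hQ1 := cf_q_pos β q' hq (k+1)
  have hQ2 := cf_q_pos β q' hq (k+2)
  have h3 : 2 * (q' k : ℝ) ≤ (q' (k+2) : ℝ) := by
    have := cf_q_add β hβ q' hq k
    have := cf_q_mono β q' hq k
    linarith
  have h4 : (q' k : ℝ) * |(q' (k+1) : ℝ) * β - (p (k+1) : ℝ)| ≤ 1/2 := by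
    calc (q' k : ℝ) * |(q' (k+1) : ℝ) * β - (p (k+1) : ℝ)|
        ≤ (q' k : ℝ) * (1 / (q' (k+2) : ℝ)) :=
          mul_le_mul_of_nonneg_left (cf_theta_le β hβ q' hq p hp (k+1)) hQ0.le
      _ ≤ 1/2 := by rw [mul_one_div, div_le_iff₀ hQ2]; linarith
  have habs := cf_Dtheta β hβ q' hq p hp k
  have htri : (1:ℝ) ≤ (q' k : ℝ) * |(q' (k+1) : ℝ) * β - (p (k+1) : ℝ)| +
      (q' (k+1) : ℝ) * |(q' k : ℝ) * β - (p k : ℝ)| := by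
    have := abs_sub ((q' k : ℝ) * ((q' (k+1) : ℝ) * β - (p (k+1) : ℝ)))
      ((q' (k+1) : ℝ) * ((q' k : ℝ) * β - (p k : ℝ)))
    rw [habs] at this
    rw [abs_mul, abs_mul, abs_of_pos hQ0, abs_of_pos hQ1] at this
    linarith
  rw [div_le_iff₀ (by positivity)]
  nlinarith [htri, h4, abs_nonneg ((q' k : ℝ) * β - (p k : ℝ))]

private theorem cf_abs_helper {A B : ℝ} (h : 0 ≤ A * B) : |B| ≤ |A + B| := by
  rcases lt_trichotomy B 0 with hB | hB | hB
  · have hA : A ≤ 0 := by nlinarith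
    rw [abs_of_neg hB, abs_of_nonpos (by linarith)]
    linarith
  · simp [hB]
  · have hA : 0 ≤ A := by nlinarith
    rw [abs_of_pos hB, abs_of_nonneg (by linarith)]
    linarith

private theorem cf_best (β : ℝ) (hβ : Irrational β) (q' : ℕ → ℕ) (hq : IsCFDenoms β q')
    (p : ℕ → ℤ) (hp : ∀ k, ((p k : ℤ) : ℝ) = (GenContFract.of β).nums k) (k : ℕ)
    (r : ℕ) (hr : 0 < r) (hrQ : (r:ℝ) < (q' (k+1) : ℝ)) (m : ℤ) :
    |(q' k : ℝ) * β - (p k : ℝ)| ≤ |(r:ℝ) * β - (m:ℝ)| := by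
  have hQ0 := cf_q_pos β q' hq k
  have hQ1 := cf_q_pos β q' hq (k+1)
  have hdet := cf_det β hβ q' hq p hp k
  set E : ℝ := (-1:ℝ)^(k+1) with hE
  have hE2 : E * E = 1 := by rw [hE, ← mul_pow]; norm_num
  set x : ℤ := (-1:ℤ)^(k+1) * ((r:ℤ) * p k - m * (q' k : ℤ)) with hxdef
  set y : ℤ := (-1:ℤ)^(k+1) * (m * (q' (k+1) : ℤ) - (r:ℤ) * p (k+1)) with hydef
  have hxE : (x:ℝ) = E * ((r:ℝ) * (p k : ℝ) - (m:ℝ) * (q' k : ℝ)) := by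
    rw [hxdef]; push_cast; ring
  have hyE : (y:ℝ) = E * ((m:ℝ) * (q' (k+1) : ℝ) - (r:ℝ) * (p (k+1) : ℝ)) := by
    rw [hydef]; push_cast; ring
  have hxq : (x:ℝ) * (q' (k+1) : ℝ) + (y:ℝ) * (q' k : ℝ) = (r:ℝ) := by
    rw [hxE, hyE]
    linear_combination ((r:ℝ) * E) * hdet + (r:ℝ) * hE2
  have hxp : (x:ℝ) * (p (k+1) : ℝ) + (y:ℝ) * (p k : ℝ) = (m:ℝ) := by
    rw [hxE, hyE]
    linear_combination ((m:ℝ) * E) * hdet + (m:ℝ) * hE2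
  have hkey : (r:ℝ) * β - (m:ℝ) =
      (x:ℝ) * ((q' (k+1) : ℝ) * β - (p (k+1) : ℝ)) + (y:ℝ) * ((q' k : ℝ) * β - (p k : ℝ)) := by
    linear_combination hxp - β * hxq
  have hr0 : (0:ℝ) < (r:ℝ) := by exact_mod_cast hr
  rcases eq_or_ne y 0 with hy0 | hy0
  · -- y = 0 : impossible
    exfalso
    rw [hy0] at hxq
    push_cast at hxq
    rcases le_or_gt x 0 with hxle | hxlt
    · have : (x:ℝ) ≤ 0 := by exact_mod_cast hxle
      nlinarith
    · have hx1 : (1:ℝ) ≤ (x:ℝ) := by exact_mod_cast hxlt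
      nlinarith
  · rcases eq_or_ne x 0 with hx0 | hx0
    · -- x = 0
      rw [hx0] at hkey
      push_cast at hkey
      rw [hkey]
      have hy1 : (1:ℝ) ≤ |(y:ℝ)| := by
        have : 1 ≤ |y| := Int.one_le_abs hy0
        exact_mod_cast this
      rw [show (0:ℝ) * ((q' (k+1) : ℝ) * β - (p (k+1) : ℝ)) +
          (y:ℝ) * ((q' k : ℝ) * β - (p k : ℝ)) =
          (y:ℝ) * ((q' k : ℝ) * β - (p k : ℝ)) by ring, abs_mul]
      nlinarith [abs_nonneg ((q' k : ℝ) * β - (p k : ℝ))]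
    · -- x ≠ 0, y ≠ 0 : opposite signs
      have hsign := cf_sign β hβ q' hq p hp k
      have hxy : x * y < 0 := by
        rcases lt_or_gt_of_ne hx0 with hx | hx <;> rcases lt_or_gt_of_ne hy0 with hy | hy
        · exfalso
          have h1 : (x:ℝ) < 0 := by exact_mod_cast hx
          have h2 : (y:ℝ) < 0 := by exact_mod_cast hy
          nlinarith [mul_neg_of_neg_of_pos h1 hQ1, mul_neg_of_neg_of_pos h2 hQ0]
        · exact mul_neg_of_neg_of_pos hx hy
        · exact mul_neg_of_pos_of_neg hx hy
        · exfalso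
          have hx' : (1:ℤ) ≤ x := hx
          have hy' : (1:ℤ) ≤ y := hy
          have h1 : (1:ℝ) ≤ (x:ℝ) := by exact_mod_cast hx'
          have h2 : (1:ℝ) ≤ (y:ℝ) := by exact_mod_cast hy'
          nlinarith
      have hprod : 0 < ((x:ℝ) * ((q' (k+1) : ℝ) * β - (p (k+1) : ℝ))) *
          ((y:ℝ) * ((q' k : ℝ) * β - (p k : ℝ))) := by
        have h1 : ((x:ℝ) * (y:ℝ)) < 0 := by exact_mod_cast hxy
        have heq : ((x:ℝ) * ((q' (k+1) : ℝ) * β - (p (k+1) : ℝ))) *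
            ((y:ℝ) * ((q' k : ℝ) * β - (p k : ℝ))) =
            ((x:ℝ) * (y:ℝ)) * (((q' (k+1) : ℝ) * β - (p (k+1) : ℝ)) *
              ((q' k : ℝ) * β - (p k : ℝ))) := by ring
        rw [heq]
        exact mul_pos_of_neg_of_neg h1 hsign
      have hy1 : (1:ℝ) ≤ |(y:ℝ)| := by
        have : 1 ≤ |y| := Int.one_le_abs hy0
        exact_mod_cast this
      have habs2 : |(y:ℝ) * ((q' k : ℝ) * β - (p k : ℝ))| ≤ |(r:ℝ) * β - (m:ℝ)| := by
        rw [hkey]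
        exact cf_abs_helper hprod.le
      calc |(q' k : ℝ) * β - (p k : ℝ)| ≤ |(y:ℝ)| * |(q' k : ℝ) * β - (p k : ℝ)| := by
            nlinarith [abs_nonneg ((q' k : ℝ) * β - (p k : ℝ))]
        _ = |(y:ℝ) * ((q' k : ℝ) * β - (p k : ℝ))| := (abs_mul _ _).symm
        _ ≤ |(r:ℝ) * β - (m:ℝ)| := habs2

private theorem cf_q_zero (β : ℝ) (q' : ℕ → ℕ) (hq : IsCFDenoms β q') : q' 0 = 1 := by
  have h := hq 0
  rw [GenContFract.zeroth_den_eq_one] at h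
  exact_mod_cast h

private theorem cf_core (β : ℝ) (hβ : Irrational β) (q' : ℕ → ℕ) (hq : IsCFDenoms β q')
    (p : ℕ → ℤ) (hp : ∀ k, ((p k : ℤ) : ℝ) = (GenContFract.of β).nums k)
    (n j : ℕ) (M : ℤ) (hj1 : 1 ≤ j) (hj2 : (j:ℝ) ≤ (q' (n+1) : ℝ)/3)
    (hM : |(j:ℝ)*β - (M:ℝ)| < 1/(6*(q' n : ℝ))) :
    ∃ s : ℕ, 1 ≤ s ∧ j = s * q' n ∧
      (j:ℝ)*β - (M:ℝ) = (s:ℝ) * ((q' n : ℝ)*β - (p n : ℝ)) := by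
  have hQ0 := cf_q_pos β q' hq n
  have hQ1 := cf_q_pos β q' hq (n+1)
  have hQge1 : (1:ℝ) ≤ (q' n : ℝ) := by exact_mod_cast cf_q_one_le β q' hq n
  have hfr : 1/(6*(q' n:ℝ)) + 1/(3*(q' n:ℝ)) = 1/(2*(q' n:ℝ)) := by
    field_simp
    ring
  set s := j / q' n with hs
  set r := j % q' n with hr
  have hmod : q' n * s + r = j := Nat.div_add_mod j (q' n)
  have hrlt : r < q' n := Nat.mod_lt j (cf_q_one_le β q' hq n)
  have hsj : (s:ℝ) * (q' n : ℝ) ≤ (j:ℝ) := by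
    have h : s * q' n ≤ j := by
      calc s * q' n = q' n * s := Nat.mul_comm _ _
        _ ≤ q' n * s + r := Nat.le_add_right _ _
        _ = j := hmod
    exact_mod_cast h
  have hθle := cf_theta_le β hβ q' hq p hp n
  have hsθ : (s:ℝ) * |(q' n : ℝ)*β - (p n : ℝ)| ≤ 1/(3*(q' n : ℝ)) := by
    have hs2 : (s:ℝ) ≤ (q' (n+1) : ℝ)/(3*(q' n : ℝ)) := by
      rw [le_div_iff₀ (by positivity)]
      nlinarith
    calc (s:ℝ) * |(q' n : ℝ)*β - (p n : ℝ)| ≤ (s:ℝ) * (1/(q' (n+1):ℝ)) :=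
          mul_le_mul_of_nonneg_left hθle (by positivity)
      _ ≤ ((q' (n+1) : ℝ)/(3*(q' n : ℝ))) * (1/(q' (n+1):ℝ)) :=
          mul_le_mul_of_nonneg_right hs2 (by positivity)
      _ = 1/(3*(q' n : ℝ)) := by field_simp
  have hr0 : r = 0 := by
    by_contra hrne
    rcases n with _ | n'
    · rw [cf_q_zero β q' hq] at hrlt
      omega
    · have hbest := cf_best β hβ q' hq p hp n' r (Nat.pos_of_ne_zero hrne)
        (by exact_mod_cast hrlt) (M - (s:ℤ) * p (n'+1))
      have hlow := cf_theta_low β hβ q' hq p hp n'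
      have hiden : (r:ℝ)*β - ((M - (s:ℤ) * p (n'+1) : ℤ):ℝ) =
          ((j:ℝ)*β - (M:ℝ)) - (s:ℝ) * ((q' (n'+1) : ℝ)*β - (p (n'+1) : ℝ)) := by
        have hc : (q' (n'+1) : ℝ) * (s:ℝ) + (r:ℝ) = (j:ℝ) := by exact_mod_cast hmod
        push_cast
        linear_combination β * hc
      have h1 : |(r:ℝ)*β - ((M - (s:ℤ) * p (n'+1) : ℤ):ℝ)| ≤
          |(j:ℝ)*β - (M:ℝ)| + (s:ℝ) * |(q' (n'+1) : ℝ)*β - (p (n'+1) : ℝ)| := by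
        rw [hiden]
        have h2 := abs_sub ((j:ℝ)*β - (M:ℝ))
          ((s:ℝ) * ((q' (n'+1) : ℝ)*β - (p (n'+1) : ℝ)))
        rw [abs_mul, Nat.abs_cast] at h2
        linarith
      linarith [hlow, hbest, h1, hsθ, hM, hfr]
  have hs1 : 1 ≤ s := by
    rcases Nat.eq_zero_or_pos s with h | h
    · exfalso
      rw [h, Nat.mul_zero, Nat.zero_add] at hmod
      omega
    · exact h
  have hjs : j = s * q' n := by
    rw [← hmod, hr0, Nat.add_zero, Nat.mul_comm]
  have hc : (q' n : ℝ) * (s:ℝ) = (j:ℝ) := by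
    have : q' n * s = j := by omega
    exact_mod_cast this
  have hiden2 : (j:ℝ)*β - (M:ℝ) = (s:ℝ) * ((q' n : ℝ)*β - (p n : ℝ)) +
      (((s:ℤ) * p n - M : ℤ):ℝ) := by
    push_cast
    linear_combination (-β) * hc
  have habse : |(((s:ℤ) * p n - M : ℤ):ℝ)| < 1 := by
    have h3 : |(((s:ℤ) * p n - M : ℤ):ℝ)| ≤
        |(j:ℝ)*β - (M:ℝ)| + (s:ℝ) * |(q' n : ℝ)*β - (p n : ℝ)| := by
      have h2 := abs_sub ((j:ℝ)*β - (M:ℝ)) ((s:ℝ) * ((q' n : ℝ)*β - (p n : ℝ)))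
      rw [abs_mul, Nat.abs_cast] at h2
      have : (((s:ℤ) * p n - M : ℤ):ℝ) =
          ((j:ℝ)*β - (M:ℝ)) - (s:ℝ) * ((q' n : ℝ)*β - (p n : ℝ)) := by
        linear_combination -hiden2
      rw [this]
      linarith
    have h4 : 1/(2*(q' n:ℝ)) ≤ 1/2 := by
      apply one_div_le_one_div_of_le
      · norm_num
      · linarith
    linarith
  have he0 : (s:ℤ) * p n - M = 0 := by
    have h : |(s:ℤ) * p n - M| < 1 := by exact_mod_cast habse
    rwa [Int.abs_lt_one_iff] at h
  refine ⟨s, hs1, hjs, ?_⟩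
  rw [hiden2, he0]
  push_cast
  ring


set_option maxHeartbeats 1000000 in
/-- Lemma 3.3 of Kanigowski–Solomko: if `‖y − y'‖ < 1/(6 q'_n)` (with representatives chosen so
that `|y − y'|` realizes the circle distance, i.e. the arc `[y,y']` is the segment between the
representatives), then either the forward iterates `R_β^k [y,y']`, `0 ≤ k ≤ ⌊q'_{n+1}/6⌋`, all
avoid `0` (mod 1), or the backward iterates do, or `0` is hit within the first `q'_n` forward
iterates. Here `0 ∈ R_β^k[y,y']` is expressed as the segment containing an integer. -/
theorem three_cases_hitting_zero (β : ℝ) (hβ : Irrational β) (q' : ℕ → ℕ)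
    (hq : IsCFDenoms β q') (n : ℕ) (y y' : ℝ)
    (hclose : |y - y'| < 1 / (6 * (q' n : ℝ))) :
    (∀ k : ℕ, k ≤ q' (n + 1) / 6 →
        ∀ m : ℤ, (m : ℝ) ∉ Set.uIcc (y + k * β) (y' + k * β)) ∨
    (∀ k : ℕ, k ≤ q' (n + 1) / 6 →
        ∀ m : ℤ, (m : ℝ) ∉ Set.uIcc (y - k * β) (y' - k * β)) ∨
    (∃ k : ℕ, k ≤ q' n - 1 ∧
        ∃ m : ℤ, (m : ℝ) ∈ Set.uIcc (y + k * β) (y' + k * β)) := by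
  classical
  by_cases h1 : ∀ k : ℕ, k ≤ q' (n + 1) / 6 →
      ∀ m : ℤ, (m : ℝ) ∉ Set.uIcc (y + k * β) (y' + k * β)
  · exact Or.inl h1
  by_cases h2 : ∀ k : ℕ, k ≤ q' (n + 1) / 6 →
      ∀ m : ℤ, (m : ℝ) ∉ Set.uIcc (y - k * β) (y' - k * β)
  · exact Or.inr (Or.inl h2)
  right; right
  push_neg at h1 h2
  obtain ⟨a, ha, m₁, hm₁⟩ := h1
  obtain ⟨b, hb, m₂, hm₂⟩ := h2
  have hq1 : 1 ≤ q' n := cf_q_one_le β q' hq n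
  by_cases hsmall : a ≤ q' n - 1
  · exact ⟨a, hsmall, m₁, hm₁⟩
  have haq : q' n ≤ a := by omega
  choose p hp using cf_num_int β hβ
  have hQ0 := cf_q_pos β q' hq n
  have hy1 : y - y' ≤ |y - y'| := le_abs_self _
  have hy2 : y' - y ≤ |y - y'| := by rw [abs_sub_comm]; exact le_abs_self _
  have hu : (m₁ : ℝ) - (a:ℝ) * β ∈ Set.uIcc y y' := by
    rw [Set.mem_uIcc] at hm₁ ⊢
    rcases hm₁ with ⟨hA, hB⟩ | ⟨hA, hB⟩
    · left; constructor <;> linarith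
    · right; constructor <;> linarith
  have hv : (m₂ : ℝ) + (b:ℝ) * β ∈ Set.uIcc y y' := by
    rw [Set.mem_uIcc] at hm₂ ⊢
    rcases hm₂ with ⟨hA, hB⟩ | ⟨hA, hB⟩
    · left; constructor <;> linarith
    · right; constructor <;> linarith
  have hN : ((q' (n+1) / 6 : ℕ) : ℝ) ≤ (q' (n+1) : ℝ) / 6 := by
    calc ((q' (n+1) / 6 : ℕ) : ℝ) ≤ (q' (n+1) : ℝ) / ((6:ℕ):ℝ) := Nat.cast_div_le
      _ = (q' (n+1) : ℝ) / 6 := by norm_num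
  have hacast : (a:ℝ) ≤ (q' (n+1) : ℝ)/6 :=
    le_trans (by exact_mod_cast Nat.cast_le.2 ha) hN
  have hbcast : (b:ℝ) ≤ (q' (n+1) : ℝ)/6 :=
    le_trans (by exact_mod_cast Nat.cast_le.2 hb) hN
  have hj1 : 1 ≤ a + b := by omega
  have hj2 : ((a + b : ℕ):ℝ) ≤ (q' (n+1) : ℝ)/3 := by
    push_cast
    linarith
  have hM : |((a + b : ℕ):ℝ)*β - ((m₁ - m₂ : ℤ):ℝ)| < 1/(6*(q' n : ℝ)) := by
    have hMeq : ((a + b : ℕ):ℝ)*β - ((m₁ - m₂ : ℤ):ℝ) =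
        ((m₂:ℝ) + (b:ℝ)*β) - ((m₁:ℝ) - (a:ℝ)*β) := by
      push_cast
      ring
    rw [hMeq]
    have habs : |((m₂:ℝ) + (b:ℝ)*β) - ((m₁:ℝ) - (a:ℝ)*β)| ≤ |y - y'| := by
      rw [Set.mem_uIcc] at hu hv
      rw [abs_sub_le_iff]
      constructor <;>
        (rcases hu with ⟨hA, hB⟩|⟨hA, hB⟩ <;> rcases hv with ⟨hC, hD⟩|⟨hC, hD⟩ <;> linarith)
    linarith
  obtain ⟨s, hs1, hjs, hsθ⟩ := cf_core β hβ q' hq p hp n (a + b) (m₁ - m₂) hj1 hj2 hM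
  -- natural number bookkeeping
  set s2 := b / q' n with hs2def
  set r2 := b % q' n with hr2def
  have hbmod : q' n * s2 + r2 = b := Nat.div_add_mod b (q' n)
  have hr2lt : r2 < q' n := Nat.mod_lt b hq1
  set i := (if r2 = 0 then s2 else s2 + 1) with hidef
  set k := i * q' n - b with hkdef
  have hbik : b + k = i * q' n ∧ k ≤ q' n - 1 ∧ i ≤ s := by
    rcases eq_or_ne r2 0 with h0 | h0
    · rw [h0, Nat.add_zero] at hbmod
      have hiq : i * q' n = b := by rw [hidef, if_pos h0, Nat.mul_comm]; exact hbmod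
      refine ⟨by omega, by omega, ?_⟩
      refine Nat.le_of_mul_le_mul_right ?_ (by omega : 0 < q' n)
      rw [hiq]
      omega
    · have hiq : i * q' n = q' n * s2 + q' n := by rw [hidef, if_neg h0]; ring
      refine ⟨by omega, by omega, ?_⟩
      refine Nat.le_of_mul_le_mul_right ?_ (by omega : 0 < q' n)
      rw [hiq]
      omega
  obtain ⟨hbk, hkle, his⟩ := hbik
  have hkcast : (b:ℝ) + (k:ℝ) = (i:ℝ) * (q' n : ℝ) := by exact_mod_cast hbk
  have hu' : ((m₂:ℝ) + (b:ℝ)*β) - (s:ℝ) * ((q' n : ℝ)*β - (p n : ℝ)) ∈ Set.uIcc y y' := by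
    have huveq : ((m₂:ℝ) + (b:ℝ)*β) - (s:ℝ) * ((q' n : ℝ)*β - (p n : ℝ)) =
        (m₁ : ℝ) - (a:ℝ) * β := by
      push_cast at hsθ
      linarith [hsθ]
    rw [huveq]
    exact hu
  have hi0 : (0:ℝ) ≤ (i:ℝ) := Nat.cast_nonneg i
  have hiscast : (i:ℝ) ≤ (s:ℝ) := by exact_mod_cast his
  have hbound : ((s:ℝ) * ((q' n : ℝ)*β - (p n : ℝ)) ≤ (i:ℝ) * ((q' n : ℝ)*β - (p n : ℝ)) ∧
        (i:ℝ) * ((q' n : ℝ)*β - (p n : ℝ)) ≤ 0) ∨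
      (0 ≤ (i:ℝ) * ((q' n : ℝ)*β - (p n : ℝ)) ∧
        (i:ℝ) * ((q' n : ℝ)*β - (p n : ℝ)) ≤ (s:ℝ) * ((q' n : ℝ)*β - (p n : ℝ))) := by
    rcases le_or_gt 0 ((q' n : ℝ)*β - (p n : ℝ)) with hθ | hθ
    · right
      exact ⟨mul_nonneg hi0 hθ, mul_le_mul_of_nonneg_right hiscast hθ⟩
    · left
      exact ⟨mul_le_mul_of_nonpos_right hiscast hθ.le,
        mul_nonpos_iff.2 (Or.inl ⟨hi0, hθ.le⟩)⟩
  refine ⟨k, hkle, m₂ + (i:ℤ) * p n, ?_⟩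
  have key : ((m₂ + (i:ℤ) * p n : ℤ):ℝ) - (k:ℝ)*β =
      ((m₂:ℝ) + (b:ℝ)*β) - (i:ℝ) * ((q' n : ℝ)*β - (p n : ℝ)) := by
    push_cast
    linear_combination (-β) * hkcast
  have hw : ((m₂:ℝ) + (b:ℝ)*β) - (i:ℝ) * ((q' n : ℝ)*β - (p n : ℝ)) ∈ Set.uIcc y y' := by
    rw [Set.mem_uIcc] at hv hu' ⊢
    rcases hbound with ⟨hE, hF⟩ | ⟨hE, hF⟩ <;>
      rcases hv with ⟨hA, hB⟩|⟨hA, hB⟩ <;> rcases hu' with ⟨hC, hD⟩|⟨hC, hD⟩ <;>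
      first
        | (left; constructor <;> linarith)
        | (right; constructor <;> linarith)
  rw [Set.mem_uIcc] at hw ⊢
  rcases hw with ⟨hA, hB⟩ | ⟨hA, hB⟩
  · left; constructor <;> linarith [key]
  · right; constructor <;> linarith [key]
end

section
/- Let φ ∈ C¹(𝕋) with ∫_𝕋 φ' dλ = 0, and α irrational. For every ε > 0 there exists δ > 0 such that for all z, z' ∈ 𝕋 with ‖z − z'‖ < δ and all k ∈ ℕ: |φ^{(k)}(z) − φ^{(k)}(z')| < ε · max{1, k‖z − z'‖}. -/
open MeasureTheory

noncomputable def en (n : ℤ) (x : ℝ) : ℂ := Complex.exp (2 * Real.pi * Complex.I * n * x)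

lemma fourier_eq_en (n : ℤ) (x : ℝ) : fourier (T := 1) n (x : AddCircle (1:ℝ)) = en n x := by
  rw [fourier_coe_apply, en]; norm_num

lemma en_norm (n : ℤ) (x : ℝ) : ‖en n x‖ = 1 := by
  rw [en, Complex.norm_exp]
  have : (2 * (Real.pi:ℂ) * Complex.I * n * x).re = 0 := by simp
  rw [this, Real.exp_zero]

lemma en_ne_one (α : ℝ) (hα : Irrational α) (n : ℤ) (hn : n ≠ 0) : en n α ≠ 1 := by
  intro h
  rw [en, Complex.exp_eq_one_iff] at h
  obtain ⟨m, hm⟩ := h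
  have h2 : (2 * (Real.pi:ℂ) * Complex.I) ≠ 0 := by
    simp [Real.pi_ne_zero, Complex.I_ne_zero]
  have hc : (n : ℂ) * α = m := by
    have : (2 * (Real.pi:ℂ) * Complex.I) * (n * α) = (2 * (Real.pi:ℂ) * Complex.I) * m := by
      linear_combination hm
    exact mul_left_cancel₀ h2 this
  have hr : (n : ℝ) * α = m := by exact_mod_cast hc
  exact (hα.intCast_mul hn).ne_int m hr

lemma geom_bound (μ : ℂ) (hμ : ‖μ‖ = 1) (h1 : μ ≠ 1) (k : ℕ) :
    ‖∑ j ∈ Finset.range k, μ ^ j‖ ≤ 2 / ‖μ - 1‖ := by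
  rw [geom_sum_eq h1, norm_div]
  have h2 : ‖μ ^ k - 1‖ ≤ 2 := by
    calc ‖μ ^ k - 1‖ ≤ ‖μ ^ k‖ + ‖(1:ℂ)‖ := norm_sub_le _ _
    _ = 2 := by rw [norm_pow, hμ]; norm_num
  have hpos : 0 < ‖μ - 1‖ := by
    rw [norm_pos_iff, sub_ne_zero]; exact h1
  gcongr

lemma sum_en (n : ℤ) (α x : ℝ) (k : ℕ) :
    ∑ j ∈ Finset.range k, en n (x + j * α) = en n x * ∑ j ∈ Finset.range k, (en n α) ^ j := by
  rw [Finset.mul_sum]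
  refine Finset.sum_congr rfl fun j _ => ?_
  rw [en, en, en, ← Complex.exp_nat_mul, ← Complex.exp_add]
  congr 1
  push_cast
  ring

lemma int_en_ne (n : ℤ) (hn : n ≠ 0) : ∫ x in (0:ℝ)..1, en n x = 0 := by
  have hc : (2 * (Real.pi:ℂ) * Complex.I * n) ≠ 0 := by
    simp [Real.pi_ne_zero, Complex.I_ne_zero, hn]
  have := integral_exp_mul_complex (a := (0:ℝ)) (b := 1) hc
  simp only [Complex.ofReal_one, Complex.ofReal_zero, mul_one, mul_zero, Complex.exp_zero] at this
  rw [show (fun x : ℝ => en n x) = (fun x : ℝ => Complex.exp ((2 * Real.pi * Complex.I * n) * x)) from rfl, this]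
  rw [show (2 * (Real.pi:ℂ) * Complex.I * n) = n * (2 * Real.pi * Complex.I) by ring,
    Complex.exp_int_mul_two_pi_mul_I]
  simp

lemma int_en_zero : ∫ x in (0:ℝ)..1, en 0 x = 1 := by
  simp [en]

lemma en_continuous (n : ℤ) : Continuous (en n) := by
  unfold en; fun_prop
open MeasureTheory Function
open scoped Finset

lemma unif_avg (α : ℝ) (hα : Irrational α) (ψ : ℝ → ℝ) (hc : Continuous ψ)
    (hper : Function.Periodic ψ 1) (hmean : ∫ x in (0:ℝ)..1, ψ x = 0) :
    ∀ ε > 0, ∃ K : ℕ, 0 < K ∧ ∀ k, K ≤ k → ∀ x : ℝ,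
      |∑ j ∈ Finset.range k, ψ (x + j * α)| ≤ ε * k := by
  intro ε hε
  haveI : Fact (0 < (1:ℝ)) := ⟨one_pos⟩
  set g : ℝ → ℂ := fun x => (ψ x : ℂ) with hg
  have hpg : Function.Periodic g 1 := fun x => by simp [hg, hper x]
  have hcg : Continuous g := Complex.continuous_ofReal.comp hc
  set Ψ : C(AddCircle (1:ℝ), ℂ) := ⟨hpg.lift, continuous_coinduced_dom.mpr hcg⟩ with hΨ
  have hΨcoe : ∀ x : ℝ, Ψ (x : AddCircle (1:ℝ)) = (ψ x : ℂ) := fun x => hpg.lift_coe x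
  -- density of trigonometric polynomials
  have hdense : Ψ ∈ closure ((Submodule.span ℂ (Set.range (@fourier 1)) : Submodule ℂ C(AddCircle (1:ℝ), ℂ)) : Set C(AddCircle (1:ℝ), ℂ)) := by
    rw [← Submodule.topologicalClosure_coe, span_fourier_closure_eq_top (T := 1)]
    trivial
  obtain ⟨P, hPmem, hPclose⟩ : ∃ P ∈ (Submodule.span ℂ (Set.range (@fourier 1)) :
      Submodule ℂ C(AddCircle (1:ℝ), ℂ)), dist Ψ P < ε/4 := by
    obtain ⟨P, hP1, hP2⟩ := Metric.mem_closure_iff.mp hdense (ε/4) (by positivity)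
    exact ⟨P, hP1, hP2⟩
  have hPn : ‖Ψ - P‖ ≤ ε/4 := by rw [← dist_eq_norm]; exact hPclose.le
  obtain ⟨c, hcP⟩ := Finsupp.mem_span_range_iff_exists_finsupp.mp hPmem
  have hPval : ∀ x : ℝ, P ((x : AddCircle (1:ℝ))) = ∑ n ∈ c.support, c n * en n x := by
    intro x
    rw [← hcP, Finsupp.sum]
    rw [ContinuousMap.coe_sum, Finset.sum_apply]
    exact Finset.sum_congr rfl fun n _ => by
      simp [fourier_eq_en n x]
  -- pointwise distance bound
  have hptw : ∀ x : ℝ, ‖Ψ ((x : AddCircle (1:ℝ))) - P ((x : AddCircle (1:ℝ)))‖ ≤ ε/4 := by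
    intro x
    calc ‖Ψ ((x : AddCircle (1:ℝ))) - P ((x : AddCircle (1:ℝ)))‖
        = ‖(Ψ - P) ((x : AddCircle (1:ℝ)))‖ := by simp
      _ ≤ ‖Ψ - P‖ := ContinuousMap.norm_coe_le_norm _ _
      _ ≤ ε/4 := hPn
  -- the constant term is small
  have hΨint : ∫ x in (0:ℝ)..1, Ψ ((x : AddCircle (1:ℝ))) = 0 := by
    have h1 : (fun x : ℝ => Ψ ((x : AddCircle (1:ℝ)))) = fun x : ℝ => (ψ x : ℂ) := funext hΨcoe
    rw [h1, intervalIntegral.integral_ofReal, hmean, Complex.ofReal_zero]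
  have hPint : ∫ x in (0:ℝ)..1, P ((x : AddCircle (1:ℝ))) = c 0 := by
    have h1 : (fun x : ℝ => P ((x : AddCircle (1:ℝ)))) = fun x : ℝ => ∑ n ∈ c.support, c n * en n x :=
      funext hPval
    rw [h1, intervalIntegral.integral_finset_sum]
    · have h2 : ∀ n ∈ c.support, (∫ x in (0:ℝ)..1, c n * en n x) =
          if n = 0 then c 0 else 0 := by
        intro n _
        rw [intervalIntegral.integral_const_mul]
        by_cases hn : n = 0
        · subst hn; rw [int_en_zero]; simp
        · rw [int_en_ne n hn]; simp [hn]
      rw [Finset.sum_congr rfl h2, Finset.sum_ite_eq' c.support 0 (fun _ => c 0)]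
      by_cases h0 : (0:ℤ) ∈ c.support
      · simp [h0]
      · simp [h0, Finsupp.notMem_support_iff.mp h0]
    · intro n _
      exact ((continuous_const.mul (en_continuous n)).intervalIntegrable 0 1)
  have hc0 : ‖c 0‖ ≤ ε/4 := by
    have hcont : Continuous fun x : ℝ => P ((x : AddCircle (1:ℝ))) :=
      P.continuous.comp (AddCircle.continuous_mk' 1)
    have hcont2 : Continuous fun x : ℝ => Ψ ((x : AddCircle (1:ℝ))) :=
      Ψ.continuous.comp (AddCircle.continuous_mk' 1)
    have heq : c 0 = ∫ x in (0:ℝ)..1, (P ((x : AddCircle (1:ℝ))) - Ψ ((x : AddCircle (1:ℝ)))) := by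
      rw [intervalIntegral.integral_sub (hcont.intervalIntegrable 0 1)
        (hcont2.intervalIntegrable 0 1), hPint, hΨint, sub_zero]
    rw [heq]
    have := intervalIntegral.norm_integral_le_of_norm_le_const (C := ε/4)
      (f := fun x : ℝ => P ((x : AddCircle (1:ℝ))) - Ψ ((x : AddCircle (1:ℝ))))
      (a := 0) (b := 1) ?_
    · simpa using this
    · intro x _
      rw [norm_sub_rev]; exact hptw x
  -- the constant C
  set C : ℝ := ∑ n ∈ c.support.erase 0, ‖c n‖ * (2 / ‖en n α - 1‖) with hC
  have hCnonneg : 0 ≤ C := Finset.sum_nonneg fun n _ => by positivity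
  -- main uniform bound
  have hmain : ∀ (k : ℕ) (x : ℝ), ‖∑ j ∈ Finset.range k, Ψ (((x + j * α : ℝ) : AddCircle (1:ℝ)))‖
      ≤ ε/2 * k + C := by
    intro k x
    have hsplit : ∑ j ∈ Finset.range k, Ψ (((x + j * α : ℝ) : AddCircle (1:ℝ)))
        = (∑ j ∈ Finset.range k, (Ψ (((x + j * α : ℝ) : AddCircle (1:ℝ)))
            - P (((x + j * α : ℝ) : AddCircle (1:ℝ)))))
          + ∑ j ∈ Finset.range k, P (((x + j * α : ℝ) : AddCircle (1:ℝ))) := by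
      rw [← Finset.sum_add_distrib]
      exact Finset.sum_congr rfl fun j _ => by ring
    rw [hsplit]
    have hb1 : ‖∑ j ∈ Finset.range k, (Ψ (((x + j * α : ℝ) : AddCircle (1:ℝ)))
        - P (((x + j * α : ℝ) : AddCircle (1:ℝ))))‖ ≤ (ε/4) * k := by
      calc _ ≤ ∑ j ∈ Finset.range k, ‖Ψ (((x + j * α : ℝ) : AddCircle (1:ℝ)))
            - P (((x + j * α : ℝ) : AddCircle (1:ℝ)))‖ := norm_sum_le _ _
        _ ≤ ∑ j ∈ Finset.range k, (ε/4) := Finset.sum_le_sum fun j _ => hptw _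
        _ = (ε/4) * k := by rw [Finset.sum_const, Finset.card_range]; ring
    have hb2 : ‖∑ j ∈ Finset.range k, P (((x + j * α : ℝ) : AddCircle (1:ℝ)))‖
        ≤ (ε/4) * k + C := by
      have hswap : ∑ j ∈ Finset.range k, P (((x + j * α : ℝ) : AddCircle (1:ℝ)))
          = ∑ n ∈ c.support, c n * ∑ j ∈ Finset.range k, en n (x + j * α) := by
        simp_rw [hPval, Finset.mul_sum]
        rw [Finset.sum_comm]
      rw [hswap]
      set t : ℤ → ℝ := fun n => ‖c n‖ * ‖∑ j ∈ Finset.range k, en n (x + j * α)‖ with ht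
      have htn : ∀ n, 0 ≤ t n := fun n => by positivity
      have hb3 : ‖∑ n ∈ c.support, c n * ∑ j ∈ Finset.range k, en n (x + j * α)‖
          ≤ ∑ n ∈ c.support, t n := by
        calc _ ≤ ∑ n ∈ c.support, ‖c n * ∑ j ∈ Finset.range k, en n (x + j * α)‖ :=
              norm_sum_le _ _
          _ = ∑ n ∈ c.support, t n := Finset.sum_congr rfl fun n _ => norm_mul _ _
      have hb4 : ∑ n ∈ c.support, t n ≤ t 0 + ∑ n ∈ c.support.erase 0, t n := by
        by_cases h0 : (0:ℤ) ∈ c.support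
        · rw [← Finset.add_sum_erase _ t h0]
        · rw [Finset.erase_eq_of_notMem h0]
          have : t 0 = 0 := by
            rw [ht]; simp [Finsupp.notMem_support_iff.mp h0]
          rw [this, zero_add]
      have hb5 : t 0 ≤ (ε/4) * k := by
        have h1 : (∑ j ∈ Finset.range k, en 0 (x + j * α)) = (k : ℂ) := by
          simp [en]
        rw [ht]
        simp only [h1]
        rw [Complex.norm_natCast]
        exact mul_le_mul_of_nonneg_right hc0 (Nat.cast_nonneg k)
      have hb6 : ∑ n ∈ c.support.erase 0, t n ≤ C := by
        rw [hC]
        refine Finset.sum_le_sum fun n hn => ?_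
        have hn0 : n ≠ 0 := Finset.ne_of_mem_erase hn
        refine mul_le_mul_of_nonneg_left ?_ (norm_nonneg _)
        rw [sum_en n α x k]
        rw [norm_mul, en_norm, one_mul]
        exact geom_bound (en n α) (en_norm n α) (en_ne_one α hα n hn0) k
      calc ‖∑ n ∈ c.support, c n * ∑ j ∈ Finset.range k, en n (x + j * α)‖
          ≤ t 0 + ∑ n ∈ c.support.erase 0, t n := hb3.trans hb4
        _ ≤ (ε/4) * k + C := add_le_add hb5 hb6
    calc ‖_ + _‖ ≤ _ + _ := norm_add_le _ _
      _ ≤ (ε/4) * k + ((ε/4) * k + C) := add_le_add hb1 hb2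
      _ = ε/2 * k + C := by ring
  -- choose K
  refine ⟨⌈2 * C / ε⌉₊ + 1, Nat.succ_pos _, fun k hk x => ?_⟩
  have hkC : C ≤ ε/2 * k := by
    have h1 : (2 * C / ε : ℝ) ≤ ⌈2 * C / ε⌉₊ := Nat.le_ceil _
    have h2 : ((⌈2 * C / ε⌉₊ + 1 : ℕ) : ℝ) ≤ k := Nat.cast_le.mpr hk
    have h3 : 2 * C / ε ≤ k := by push_cast at h2 ⊢; linarith
    rw [div_le_iff₀ hε] at h3
    linarith
  have heq : (∑ j ∈ Finset.range k, Ψ (((x + j * α : ℝ) : AddCircle (1:ℝ))))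
      = ((∑ j ∈ Finset.range k, ψ (x + j * α) : ℝ) : ℂ) := by
    have h1 : ∀ j ∈ Finset.range k, Ψ (((x + j * α : ℝ) : AddCircle (1:ℝ)))
        = ((ψ (x + j * α) : ℂ)) := fun j _ => hΨcoe _
    rw [Finset.sum_congr rfl h1]
    push_cast
    rfl
  have := hmain k x
  rw [heq, Complex.norm_real, Real.norm_eq_abs] at this
  calc |∑ j ∈ Finset.range k, ψ (x + j * α)| ≤ ε/2 * k + C := this
    _ ≤ ε/2 * k + ε/2 * k := by linarith
    _ = ε * k := by ring


/-- Distance to the nearest integer, i.e. the distance of `x mod 1` to `0` on the circle. -/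
noncomputable def nearestIntDist (x : ℝ) : ℝ := |x - round x|

/-- Uniform Lipschitz-type estimate for Birkhoff sums of a `C¹` function on the circle whose
derivative has zero mean: for every `ε > 0` there is `δ > 0` such that whenever
`‖z − z'‖ < δ` and `k ∈ ℕ`, `|φ^{(k)}(z) − φ^{(k)}(z')| < ε · max{1, k‖z − z'‖}`. -/
theorem birkhoff_C1_estimate (α : ℝ) (hα : Irrational α) (φ : ℝ → ℝ)
    (hφ : ContDiff ℝ 1 φ) (hper : Function.Periodic φ 1)
    (hmean : ∫ x in (0:ℝ)..1, deriv φ x = 0) :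
    ∀ ε > 0, ∃ δ > 0, ∀ z z' : ℝ, nearestIntDist (z - z') < δ → ∀ k : ℕ,
      |birkhoff α φ k z - birkhoff α φ k z'| <
        ε * max 1 ((k : ℝ) * nearestIntDist (z - z')) := by
  intro ε hε
  set ψ : ℝ → ℝ := deriv φ with hψ
  have hψc : Continuous ψ := hφ.continuous_deriv le_rfl
  have hψper : Function.Periodic ψ 1 := by
    intro x
    have h1 : (fun y : ℝ => φ (y + 1)) = φ := funext fun y => hper y
    calc ψ (x + 1) = deriv (fun y : ℝ => φ (y + 1)) x := (deriv_comp_add_const φ 1 x).symm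
      _ = ψ x := by rw [h1]
  -- bound on ψ
  obtain ⟨M, hMpos, hM⟩ : ∃ M > 0, ∀ x : ℝ, |ψ x| ≤ M := by
    obtain ⟨M0, hM0⟩ := (isCompact_Icc (a := (0:ℝ)) (b := 1)).exists_bound_of_continuousOn
      hψc.continuousOn
    refine ⟨|M0| + 1, by positivity, fun x => ?_⟩
    have hfr : ψ (Int.fract x) = ψ x := by
      have : Int.fract x = x - (⌊x⌋ : ℤ) * 1 := by rw [mul_one]; rfl
      rw [this, hψper.sub_int_mul_eq]
    have hmem : Int.fract x ∈ Set.Icc (0:ℝ) 1 :=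
      ⟨Int.fract_nonneg x, (Int.fract_lt_one x).le⟩
    have := hM0 (Int.fract x) hmem
    rw [Real.norm_eq_abs, hfr] at this
    calc |ψ x| ≤ M0 := this
      _ ≤ |M0| + 1 := by have := le_abs_self M0; linarith
  -- uniform Birkhoff averaging of ψ
  obtain ⟨K, hK0, hKb⟩ := unif_avg α hα ψ hψc hψper hmean (ε/2) (by positivity)
  have hKR : (0:ℝ) < K := by exact_mod_cast hK0
  -- choose δ
  refine ⟨min (1 / K) (ε / (2 * K * M + 2)), by positivity, fun z z' hd k => ?_⟩
  set d : ℝ := nearestIntDist (z - z') with hdd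
  have hd0 : 0 ≤ d := abs_nonneg _
  have hdK : d < 1 / K := lt_of_lt_of_le hd (min_le_left _ _)
  have hdε : d < ε / (2 * K * M + 2) := lt_of_lt_of_le hd (min_le_right _ _)
  -- replace z' by the translate z''
  set m : ℤ := round (z - z') with hm
  set z'' : ℝ := z' + m with hz''
  have hzz : |z - z''| = d := by
    rw [hdd, nearestIntDist, hz'', hm]; ring_nf
  have hbeq : birkhoff α φ k z' = birkhoff α φ k z'' := by
    unfold birkhoff
    refine Finset.sum_congr rfl fun j _ => ?_
    have h1 : z'' + j * α = (z' + j * α) + m * 1 := by rw [hz'']; ring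
    rw [h1, ← hper.sub_int_mul_eq (x := (z' + j * α) + m * 1) m]
    congr 1; ring
  -- derivative of the Birkhoff sum
  have hderiv : ∀ x : ℝ, HasDerivAt (birkhoff α φ k)
      (∑ j ∈ Finset.range k, ψ (x + j * α)) x := by
    intro x
    have : HasDerivAt (fun y : ℝ => ∑ j ∈ Finset.range k, φ (y + j * α))
        (∑ j ∈ Finset.range k, ψ (x + j * α)) x := by
      refine HasDerivAt.fun_sum fun j _ => ?_
      exact HasDerivAt.comp_add_const x (j * α)
        ((hφ.differentiable one_ne_zero (x + j * α)).hasDerivAt)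
    exact this
  -- MVT-style bound
  have hMVT : ∀ B : ℝ, (∀ x : ℝ, |∑ j ∈ Finset.range k, ψ (x + j * α)| ≤ B) →
      |birkhoff α φ k z - birkhoff α φ k z''| ≤ B * d := by
    intro B hB
    have := Convex.norm_image_sub_le_of_norm_deriv_le (s := Set.univ) (f := birkhoff α φ k)
      (C := B) (fun x _ => (hderiv x).differentiableAt)
      (fun x _ => by rw [(hderiv x).deriv, Real.norm_eq_abs]; exact hB x)
      convex_univ (Set.mem_univ z'') (Set.mem_univ z)
    rw [Real.norm_eq_abs, Real.norm_eq_abs, abs_sub_comm z z''] at this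
    rw [← hzz, abs_sub_comm z z'']
    exact this
  -- trivial bound
  have hB1 : ∀ x : ℝ, |∑ j ∈ Finset.range k, ψ (x + j * α)| ≤ k * M := by
    intro x
    calc |∑ j ∈ Finset.range k, ψ (x + j * α)| ≤ ∑ j ∈ Finset.range k, |ψ (x + j * α)| :=
          Finset.abs_sum_le_sum_abs _ _
      _ ≤ ∑ j ∈ Finset.range k, M := Finset.sum_le_sum fun j _ => hM _
      _ = k * M := by rw [Finset.sum_const, Finset.card_range, nsmul_eq_mul]
  rw [hbeq]
  -- case analysis
  rcases le_or_gt 1 ((k:ℝ) * d) with hcase | hcase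
  · -- k d ≥ 1 : then k ≥ K and the averaged bound applies
    rw [max_eq_right hcase]
    have hdpos : 0 < d := by
      rcases hd0.lt_or_eq with h | h
      · exact h
      · exfalso; rw [← h, mul_zero] at hcase; linarith
    have hkK : K ≤ k := by
      by_contra hlt
      push_neg at hlt
      have h1 : (k:ℝ) ≤ K := by exact_mod_cast hlt.le
      have h2 : (k:ℝ) * d < K * (1/K) := by
        apply mul_lt_mul' h1 hdK hd0 hKR
      rw [mul_one_div_cancel hKR.ne'] at h2
      linarith
    have := hMVT (ε/2 * k) (hKb k hkK)
    calc |birkhoff α φ k z - birkhoff α φ k z''| ≤ ε/2 * k * d := this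
      _ < ε * (k * d) := by nlinarith
  · -- k d < 1
    rw [max_eq_left hcase.le]; rw [mul_one]
    rcases le_or_gt K k with hkK | hkK
    · have := hMVT (ε/2 * k) (hKb k hkK)
      calc |birkhoff α φ k z - birkhoff α φ k z''| ≤ ε/2 * k * d := this
        _ = ε/2 * (k * d) := by ring
        _ < ε := by nlinarith
    · have hkKR : (k:ℝ) ≤ K := by exact_mod_cast hkK.le
      have := hMVT ((k:ℝ) * M) hB1
      calc |birkhoff α φ k z - birkhoff α φ k z''| ≤ (k:ℝ) * M * d := this
        _ ≤ K * M * d := by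
            apply mul_le_mul_of_nonneg_right (mul_le_mul_of_nonneg_right hkKR hMpos.le) hd0
        _ < ε := by
            have h2 : d * (2 * K * M + 2) < ε := by
              rw [div_eq_mul_inv] at hdε
              have h3 : (0:ℝ) < 2 * K * M + 2 := by positivity
              calc d * (2 * K * M + 2) < ε * (2 * K * M + 2)⁻¹ * (2 * K * M + 2) := by
                    exact mul_lt_mul_of_pos_right hdε h3
                _ = ε := by field_simp
            nlinarith
end
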